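/- arXiv:0911.3970 — 3 statements merged into one kernel-verified Lean document; each statement's English description precedes it below -/
import Mathlib

section
/- Assume L²(Ω₁,ν₁) and L²(Ω₂,ν₂) are infinite-dimensional. Then |σ_d(T)| ≤ |σ_d(K₁)| · |σ_d(K₂)|, where |·| denotes the cardinality of a set. -/
open MeasureTheory Filter Topology Metric

noncomputable section

variable {𝓗 : Type*} [NormedAddCommGroup 𝓗] [InnerProductSpace ℂ 𝓗]

/-- `z` is an isolated point of the set `S`. -/
def IsIsolatedIn (S : Set ℂ) (z : ℂ) : Prop :=
  z ∈ S ∧ ∃ ε > 0, S ∩ Metric.ball z ε = {z}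

/-- Discrete spectrum: the set of isolated points of the spectrum that are eigenvalues of
finite multiplicity. -/
def discreteSpectrum (A : 𝓗 →L[ℂ] 𝓗) : Set ℂ :=
  {z | IsIsolatedIn (spectrum ℂ A) z ∧
    Module.End.HasEigenvalue (A : 𝓗 →ₗ[ℂ] 𝓗) z ∧
    FiniteDimensional ℂ (Module.End.eigenspace (A : 𝓗 →ₗ[ℂ] 𝓗) z)}

/-- Essential spectrum: spectrum minus discrete spectrum. -/
def essSpectrum (A : 𝓗 →L[ℂ] 𝓗) : Set ℂ :=
  spectrum ℂ A \ discreteSpectrum A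

/-- Bottom of the essential spectrum (as a real number). -/
def Emin (A : 𝓗 →L[ℂ] 𝓗) : ℝ :=
  sInf {x : ℝ | (x : ℂ) ∈ essSpectrum A}

/-- The span of all eigenspaces with (real) eigenvalue strictly below `E`; its dimension is
the number of eigenvalues below `E` counted with multiplicity. -/
def eigBelow (A : 𝓗 →L[ℂ] 𝓗) (E : ℝ) : Submodule ℂ 𝓗 :=
  ⨆ t : {t : ℝ // t < E}, Module.End.eigenspace (A : 𝓗 →ₗ[ℂ] 𝓗) ((t : ℝ) : ℂ)

open ContinuousLinearMap
open scoped ENNReal NNReal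

section SpectralAux

variable {H : Type*} [NormedAddCommGroup H] [InnerProductSpace ℂ H] [CompleteSpace H]

local notation "⟪" x ", " y "⟫" => @inner ℂ _ _ x y

lemma aux_mem_spectrum_of_hasEigenvalue {A : H →L[ℂ] H} {z : ℂ}
    (h : Module.End.HasEigenvalue (↑A : H →ₗ[ℂ] H) z) : z ∈ spectrum ℂ A := by
  obtain ⟨v, hv⟩ := h.exists_hasEigenvector
  rw [spectrum.mem_iff]
  intro hu
  have hAv : A v = z • v := by
    have := Module.End.mem_eigenspace_iff.1 hv.1
    simpa using this
  have h0 : (algebraMap ℂ (H →L[ℂ] H) z - A) v = 0 := by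
    simp [Algebra.algebraMap_eq_smul_one, ContinuousLinearMap.sub_apply,
      ContinuousLinearMap.smul_apply, ContinuousLinearMap.one_apply, hAv]
  apply hv.2
  calc v = ((1 : H →L[ℂ] H)) v := rfl
    _ = ((↑hu.unit⁻¹ * ↑hu.unit : H →L[ℂ] H)) v := by rw [Units.inv_mul]
    _ = ((↑hu.unit⁻¹ : H →L[ℂ] H) * (algebraMap ℂ (H →L[ℂ] H) z - A)) v := by
        rw [hu.unit_spec]
    _ = 0 := by
        rw [ContinuousLinearMap.mul_apply, h0, map_zero]


set_option linter.unusedSectionVars false in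
lemma aux_isUnit_of_bddBelow {A : H →L[ℂ] H} {c : ℝ} (hc : 0 < c)
    (h1 : ∀ u, c * ‖u‖ ≤ ‖A u‖) (h2 : ∀ u, c * ‖u‖ ≤ ‖(star A) u‖) : IsUnit A := by
  rw [ContinuousLinearMap.isUnit_iff_bijective,
    ContinuousLinearMap.bijective_iff_dense_range_and_antilipschitz]
  constructor
  · rw [Submodule.topologicalClosure_eq_top_iff, Submodule.eq_bot_iff]
    intro v hv
    rw [Submodule.mem_orthogonal] at hv
    have hA0 : (ContinuousLinearMap.adjoint A) v = 0 := by
      have had : ⟪(ContinuousLinearMap.adjoint A) v, (ContinuousLinearMap.adjoint A) v⟫ = 0 := by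
        rw [ContinuousLinearMap.adjoint_inner_right]
        exact hv _ (LinearMap.mem_range_self _ _)
      simpa [inner_self_eq_zero] using had
    have h2v := h2 v
    rw [ContinuousLinearMap.star_eq_adjoint, hA0] at h2v
    simp only [norm_zero] at h2v
    have hv0 : ‖v‖ ≤ 0 := by nlinarith [norm_nonneg v]
    have : ‖v‖ = 0 := le_antisymm hv0 (norm_nonneg v)
    simpa using this
  · refine ⟨⟨c⁻¹, by positivity⟩, A.antilipschitz_of_bound fun x => ?_⟩
    have h := h1 x
    change ‖x‖ ≤ c⁻¹ * ‖A x‖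
    rw [le_inv_mul_iff₀ hc]
    linarith [mul_comm c ‖x‖]

set_option linter.unusedSectionVars false in
lemma aux_norm_conj_eigen {A : H →L[ℂ] H} (hA : IsSelfAdjoint A) (z : ℂ) (u : H) :
    ‖A u - z • u‖ = ‖A u - (starRingEnd ℂ z) • u‖ := by
  have hsym : ⟪A u, u⟫ = ⟪u, A u⟫ := hA.isSymmetric u u
  have hreal : (starRingEnd ℂ) ⟪A u, u⟫ = ⟪A u, u⟫ := by
    rw [inner_conj_symm]; exact hsym.symm
  have hre : ∀ w : ℂ, RCLike.re ⟪A u, w • u⟫ = w.re * (⟪A u, u⟫ : ℂ).re := by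
    intro w
    rw [inner_smul_right]
    obtain ⟨r, hr⟩ := Complex.conj_eq_iff_real.1 hreal
    rw [hr]
    simp [Complex.mul_re]
  have hsq : ‖A u - z • u‖ ^ 2 = ‖A u - (starRingEnd ℂ z) • u‖ ^ 2 := by
    rw [@norm_sub_sq ℂ, @norm_sub_sq ℂ, hre, hre]
    simp [norm_smul]
  have h1 := norm_nonneg (A u - z • u)
  have h2 := norm_nonneg (A u - (starRingEnd ℂ z) • u)
  nlinarith

set_option linter.unusedSectionVars false in
lemma aux_exists_approx {A : H →L[ℂ] H} (hA : IsSelfAdjoint A) {z : ℂ}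
    (hz : z ∈ spectrum ℂ A) {ε : ℝ} (hε : 0 < ε) :
    ∃ u : H, ‖u‖ = 1 ∧ ‖A u - z • u‖ < ε := by
  by_contra hcon
  push_neg at hcon
  have hb : ∀ u : H, ε * ‖u‖ ≤ ‖A u - z • u‖ := by
    intro u
    rcases eq_or_ne u 0 with rfl | hu
    · simp
    · have hnu : (0:ℝ) < ‖u‖ := norm_pos_iff.2 hu
      have hn1 : ‖((‖u‖ : ℂ))⁻¹ • u‖ = 1 := by
        rw [norm_smul, norm_inv, Complex.norm_real, norm_norm]
        field_simp
      have hthis := hcon (((‖u‖ : ℂ))⁻¹ • u) hn1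
      have heq : A (((‖u‖ : ℂ))⁻¹ • u) - z • (((‖u‖ : ℂ))⁻¹ • u)
          = ((‖u‖ : ℂ))⁻¹ • (A u - z • u) := by
        rw [A.map_smul, smul_sub, smul_comm]
      rw [heq, norm_smul, norm_inv, Complex.norm_real, norm_norm] at hthis
      rw [le_inv_mul_iff₀ hnu] at hthis
      linarith [mul_comm ε ‖u‖]
  set B : H →L[ℂ] H := A - z • (1 : H →L[ℂ] H) with hB
  have hBapp : ∀ u, B u = A u - z • u := by
    intro u; simp [hB]
  have hBstarapp : ∀ u, (star B) u = A u - (starRingEnd ℂ z) • u := by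
    intro u
    have : star B = A - (starRingEnd ℂ z) • (1 : H →L[ℂ] H) := by
      rw [hB, star_sub, star_smul, hA.star_eq, star_one]
      rfl
    rw [this]; simp
  have hub : IsUnit B := by
    apply aux_isUnit_of_bddBelow hε
    · intro u; rw [hBapp]; exact hb u
    · intro u; rw [hBstarapp, ← aux_norm_conj_eigen hA]; exact hb u
  rw [spectrum.mem_iff] at hz
  apply hz
  have : algebraMap ℂ (H →L[ℂ] H) z - A = -B := by
    rw [hB, Algebra.algebraMap_eq_smul_one]; abel
  rw [this]
  exact hub.neg

set_option linter.unusedSectionVars false in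
lemma aux_mem_spectrum_of_approx {A : H →L[ℂ] H} {z : ℂ} {c : ℝ} (hc : 0 < c)
    (h : ∀ ε > 0, ∃ u : H, c ≤ ‖u‖ ∧ ‖A u - z • u‖ ≤ ε) : z ∈ spectrum ℂ A := by
  rw [spectrum.mem_iff]
  intro hu
  set Binv : H →L[ℂ] H := ↑hu.unit⁻¹ with hBinv
  obtain ⟨u, hcu, hAu⟩ := h (c / (‖Binv‖ + 1)) (by positivity)
  have hid : Binv ((algebraMap ℂ (H →L[ℂ] H) z - A) u) = u := by
    have hmul : (↑hu.unit⁻¹ : H →L[ℂ] H) * ↑hu.unit = 1 := hu.unit.inv_mul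
    rw [hu.unit_spec] at hmul
    have hfun := DFunLike.congr_fun hmul u
    rw [ContinuousLinearMap.mul_apply, ContinuousLinearMap.one_apply] at hfun
    exact hfun
  have happ : (algebraMap ℂ (H →L[ℂ] H) z - A) u = -(A u - z • u) := by
    simp [Algebra.algebraMap_eq_smul_one, neg_sub]
  have hle : ‖u‖ ≤ ‖Binv‖ * ‖A u - z • u‖ := by
    calc ‖u‖ = ‖Binv ((algebraMap ℂ (H →L[ℂ] H) z - A) u)‖ := by rw [hid]
      _ ≤ ‖Binv‖ * ‖(algebraMap ℂ (H →L[ℂ] H) z - A) u‖ := Binv.le_opNorm _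
      _ = ‖Binv‖ * ‖A u - z • u‖ := by rw [happ, norm_neg]
  have hBn : (0:ℝ) ≤ ‖Binv‖ := norm_nonneg _
  have : ‖Binv‖ * ‖A u - z • u‖ ≤ ‖Binv‖ * (c / (‖Binv‖ + 1)) :=
    mul_le_mul_of_nonneg_left hAu hBn
  have hlt : ‖Binv‖ * (c / (‖Binv‖ + 1)) < c := by
    rw [mul_div_assoc']
    rw [div_lt_iff₀ (by positivity)]
    nlinarith
  linarith

end SpectralAux

section TensorAux

variable {X Y : Type*} [MeasurableSpace X] [MeasurableSpace Y]
variable (μ : Measure X) (ν : Measure Y) [IsFiniteMeasure μ] [IsFiniteMeasure ν]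

lemma aux_memℒp_tens (φ : Lp ℂ 2 μ) (g : Lp ℂ 2 ν) :
    MemLp (fun p : X × Y => φ p.1 * g p.2) 2 (μ.prod ν) := by
  have hm : AEStronglyMeasurable (fun p : X × Y => φ p.1 * g p.2) (μ.prod ν) :=
    ((Lp.aestronglyMeasurable φ).comp_quasiMeasurePreserving
      Measure.quasiMeasurePreserving_fst).mul
     ((Lp.aestronglyMeasurable g).comp_quasiMeasurePreserving
      Measure.quasiMeasurePreserving_snd)
  rw [memLp_two_iff_integrable_sq_norm hm]
  have h1 : Integrable (fun x => ‖(φ : X → ℂ) x‖ ^ 2) μ :=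
    (memLp_two_iff_integrable_sq_norm (Lp.aestronglyMeasurable φ)).1 (Lp.memLp φ)
  have h2 : Integrable (fun y => ‖(g : Y → ℂ) y‖ ^ 2) ν :=
    (memLp_two_iff_integrable_sq_norm (Lp.aestronglyMeasurable g)).1 (Lp.memLp g)
  have := h1.mul_prod h2
  simpa [norm_mul, mul_pow] using this

lemma aux_eLpNorm_tens (φ : Lp ℂ 2 μ) (g : Lp ℂ 2 ν) :
    eLpNorm (fun p : X × Y => φ p.1 * g p.2) 2 (μ.prod ν)
      = eLpNorm (⇑φ) 2 μ * eLpNorm (⇑g) 2 ν := by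
  rw [eLpNorm_eq_lintegral_rpow_enorm_toReal two_ne_zero ENNReal.ofNat_ne_top,
    eLpNorm_eq_lintegral_rpow_enorm_toReal two_ne_zero ENNReal.ofNat_ne_top,
    eLpNorm_eq_lintegral_rpow_enorm_toReal two_ne_zero ENNReal.ofNat_ne_top]
  simp only [ENNReal.toReal_ofNat]
  have hpt : ∀ p : X × Y, ‖φ p.1 * g p.2‖ₑ ^ (2:ℝ)
      = ‖φ p.1‖ₑ ^ (2:ℝ) * ‖g p.2‖ₑ ^ (2:ℝ) := by
    intro p
    rw [enorm_mul]
    rw [ENNReal.mul_rpow_of_nonneg _ _ (show (0:ℝ) ≤ 2 by norm_num)]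
  simp_rw [hpt]
  rw [lintegral_prod_mul (f := fun x => ‖φ x‖ₑ ^ (2:ℝ))
      (g := fun y => ‖g y‖ₑ ^ (2:ℝ))
      ((ENNReal.continuous_rpow_const.measurable).comp_aemeasurable
        (Lp.aestronglyMeasurable φ).enorm)
      ((ENNReal.continuous_rpow_const.measurable).comp_aemeasurable
        (Lp.aestronglyMeasurable g).enorm)]
  rw [ENNReal.mul_rpow_of_nonneg _ _ (show (0:ℝ) ≤ 1/2 by norm_num)]

def tensLp (φ : Lp ℂ 2 μ) (g : Lp ℂ 2 ν) : Lp ℂ 2 (μ.prod ν) :=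
  (aux_memℒp_tens μ ν φ g).toLp _

lemma tensLp_coe (φ : Lp ℂ 2 μ) (g : Lp ℂ 2 ν) :
    ⇑(tensLp μ ν φ g) =ᵐ[μ.prod ν] fun p => φ p.1 * g p.2 :=
  MemLp.coeFn_toLp _

lemma tensLp_norm (φ : Lp ℂ 2 μ) (g : Lp ℂ 2 ν) : ‖tensLp μ ν φ g‖ = ‖φ‖ * ‖g‖ := by
  rw [tensLp, Lp.norm_toLp, aux_eLpNorm_tens, ENNReal.toReal_mul, Lp.norm_def, Lp.norm_def]

lemma tensLp_add_left (φ φ' : Lp ℂ 2 μ) (g : Lp ℂ 2 ν) :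
    tensLp μ ν (φ + φ') g = tensLp μ ν φ g + tensLp μ ν φ' g := by
  apply Lp.ext
  have h5 : ∀ᵐ p ∂μ.prod ν, (φ + φ') p.1 = φ p.1 + φ' p.1 :=
    Measure.quasiMeasurePreserving_fst.ae (Lp.coeFn_add φ φ')
  filter_upwards [tensLp_coe μ ν (φ + φ') g,
    Lp.coeFn_add (tensLp μ ν φ g) (tensLp μ ν φ' g),
    tensLp_coe μ ν φ g, tensLp_coe μ ν φ' g, h5] with p e1 e2 e3 e4 e5
  rw [e1, e5]
  simp only [Pi.add_apply] at e2 ⊢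
  rw [e2, e3, e4, add_mul]

lemma tensLp_smul_left (z : ℂ) (φ : Lp ℂ 2 μ) (g : Lp ℂ 2 ν) :
    tensLp μ ν (z • φ) g = z • tensLp μ ν φ g := by
  apply Lp.ext
  have h5 : ∀ᵐ p ∂μ.prod ν, (z • φ) p.1 = z * φ p.1 :=
    Measure.quasiMeasurePreserving_fst.ae (Lp.coeFn_smul z φ)
  filter_upwards [tensLp_coe μ ν (z • φ) g, Lp.coeFn_smul z (tensLp μ ν φ g),
    tensLp_coe μ ν φ g, h5] with p e1 e2 e3 e5
  rw [e1, e5, e2]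
  simp only [Pi.smul_apply, smul_eq_mul]
  rw [e3, mul_assoc]

lemma tensLp_add_right (φ : Lp ℂ 2 μ) (g g' : Lp ℂ 2 ν) :
    tensLp μ ν φ (g + g') = tensLp μ ν φ g + tensLp μ ν φ g' := by
  apply Lp.ext
  have h5 : ∀ᵐ p ∂μ.prod ν, (g + g') p.2 = g p.2 + g' p.2 :=
    Measure.quasiMeasurePreserving_snd.ae (Lp.coeFn_add g g')
  filter_upwards [tensLp_coe μ ν φ (g + g'),
    Lp.coeFn_add (tensLp μ ν φ g) (tensLp μ ν φ g'),
    tensLp_coe μ ν φ g, tensLp_coe μ ν φ g', h5] with p e1 e2 e3 e4 e5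
  rw [e1, e5]
  simp only [Pi.add_apply] at e2 ⊢
  rw [e2, e3, e4, mul_add]

lemma tensLp_smul_right (z : ℂ) (φ : Lp ℂ 2 μ) (g : Lp ℂ 2 ν) :
    tensLp μ ν φ (z • g) = z • tensLp μ ν φ g := by
  apply Lp.ext
  have h5 : ∀ᵐ p ∂μ.prod ν, (z • g) p.2 = z * g p.2 :=
    Measure.quasiMeasurePreserving_snd.ae (Lp.coeFn_smul z g)
  filter_upwards [tensLp_coe μ ν φ (z • g), Lp.coeFn_smul z (tensLp μ ν φ g),
    tensLp_coe μ ν φ g, h5] with p e1 e2 e3 e5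
  rw [e1, e5, e2]
  simp only [Pi.smul_apply, smul_eq_mul]
  rw [e3]
  ring

lemma tensLp_sub_left (φ φ' : Lp ℂ 2 μ) (g : Lp ℂ 2 ν) :
    tensLp μ ν (φ - φ') g = tensLp μ ν φ g - tensLp μ ν φ' g := by
  have h1 : φ - φ' = φ + (-1 : ℂ) • φ' := by
    rw [neg_one_smul]; abel
  rw [h1, tensLp_add_left, tensLp_smul_left, neg_one_smul]
  abel

lemma tensLp_sub_right (φ : Lp ℂ 2 μ) (g g' : Lp ℂ 2 ν) :
    tensLp μ ν φ (g - g') = tensLp μ ν φ g - tensLp μ ν φ g' := by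
  have h1 : g - g' = g + (-1 : ℂ) • g' := by
    rw [neg_one_smul]; abel
  rw [h1, tensLp_add_right, tensLp_smul_right, neg_one_smul]
  abel

lemma tensLp_eq_zero_left {φ : Lp ℂ 2 μ} {g : Lp ℂ 2 ν} (hg : g ≠ 0)
    (h : tensLp μ ν φ g = 0) : φ = 0 := by
  have := congrArg norm h
  rw [tensLp_norm, norm_zero] at this
  rcases mul_eq_zero.1 this with h' | h'
  · exact norm_eq_zero.1 h'
  · exact absurd (norm_eq_zero.1 h') hg

lemma tensLp_eq_zero_right {φ : Lp ℂ 2 μ} {g : Lp ℂ 2 ν} (hφ : φ ≠ 0)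
    (h : tensLp μ ν φ g = 0) : g = 0 := by
  have := congrArg norm h
  rw [tensLp_norm, norm_zero] at this
  rcases mul_eq_zero.1 this with h' | h'
  · exact absurd (norm_eq_zero.1 h') hφ
  · exact norm_eq_zero.1 h'

end TensorAux

section KernelAux

variable {X Y : Type*} [MeasurableSpace X] [MeasurableSpace Y]
variable (μ : Measure X) (ν : Measure Y) [IsFiniteMeasure μ] [IsFiniteMeasure ν]

lemma aux_ae_swap {p : X × Y → Prop} (h : ∀ᵐ z ∂μ.prod ν, p z) :
    ∀ᵐ y ∂ν, ∀ᵐ x ∂μ, p (x, y) := by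
  have h' : ∀ᵐ w ∂ν.prod μ, p (Prod.swap w) :=
    (Measure.measurePreserving_swap (μ := ν) (ν := μ)).quasiMeasurePreserving.ae h
  have h2 := MeasureTheory.Measure.ae_ae_of_ae_prod h'
  filter_upwards [h2] with y hy
  filter_upwards [hy] with x hx
  simpa using hx

set_option linter.unusedSectionVars false in
lemma aux_T₁_tens (k₁ : X → X → ℂ)
    (K₁ : Lp ℂ 2 μ →L[ℂ] Lp ℂ 2 μ) (T₁ : Lp ℂ 2 (μ.prod ν) →L[ℂ] Lp ℂ 2 (μ.prod ν))
    (hK₁ : ∀ φ : Lp ℂ 2 μ, (⇑(K₁ φ) : X → ℂ) =ᵐ[μ] fun x => ∫ s, k₁ x s * φ s ∂μ)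
    (hT₁ : ∀ f : Lp ℂ 2 (μ.prod ν),
      (⇑(T₁ f)) =ᵐ[μ.prod ν] fun p => ∫ s, k₁ p.1 s * f (s, p.2) ∂μ)
    (φ : Lp ℂ 2 μ) (g : Lp ℂ 2 ν) : T₁ (tensLp μ ν φ g) = tensLp μ ν (K₁ φ) g := by
  apply Lp.ext
  have hsl : ∀ᵐ y ∂ν, ∀ᵐ x ∂μ, (tensLp μ ν φ g) (x, y) = φ x * g y :=
    aux_ae_swap μ ν (tensLp_coe μ ν φ g)
  have h3 : ∀ᵐ y ∂ν, ∀ x, (∫ s, k₁ x s * (tensLp μ ν φ g) (s, y) ∂μ)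
      = (∫ s, k₁ x s * φ s ∂μ) * g y := by
    filter_upwards [hsl] with y hy x
    rw [← integral_mul_const]
    apply integral_congr_ae
    filter_upwards [hy] with s hs
    rw [hs]; ring
  have h2 : ∀ᵐ z ∂μ.prod ν, (∫ s, k₁ z.1 s * (tensLp μ ν φ g) (s, z.2) ∂μ)
      = (∫ s, k₁ z.1 s * φ s ∂μ) * g z.2 := by
    filter_upwards [Measure.quasiMeasurePreserving_snd.ae h3] with z hz
    exact hz z.1
  have h4 : ∀ᵐ z ∂μ.prod ν, (K₁ φ) z.1 = ∫ s, k₁ z.1 s * φ s ∂μ :=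
    Measure.quasiMeasurePreserving_fst.ae (hK₁ φ)
  filter_upwards [hT₁ (tensLp μ ν φ g), h2, tensLp_coe μ ν (K₁ φ) g, h4] with z e1 e2 e3 e4
  rw [e1, e2, e3, e4]

set_option linter.unusedSectionVars false in
lemma aux_T₂_tens (k₂ : Y → Y → ℂ)
    (K₂ : Lp ℂ 2 ν →L[ℂ] Lp ℂ 2 ν) (T₂ : Lp ℂ 2 (μ.prod ν) →L[ℂ] Lp ℂ 2 (μ.prod ν))
    (hK₂ : ∀ g : Lp ℂ 2 ν, (⇑(K₂ g) : Y → ℂ) =ᵐ[ν] fun y => ∫ t, k₂ y t * g t ∂ν)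
    (hT₂ : ∀ f : Lp ℂ 2 (μ.prod ν),
      (⇑(T₂ f)) =ᵐ[μ.prod ν] fun p => ∫ t, k₂ p.2 t * f (p.1, t) ∂ν)
    (φ : Lp ℂ 2 μ) (g : Lp ℂ 2 ν) : T₂ (tensLp μ ν φ g) = tensLp μ ν φ (K₂ g) := by
  apply Lp.ext
  have hsl : ∀ᵐ x ∂μ, ∀ᵐ y ∂ν, (tensLp μ ν φ g) (x, y) = φ x * g y :=
    MeasureTheory.Measure.ae_ae_of_ae_prod (tensLp_coe μ ν φ g)
  have h3 : ∀ᵐ x ∂μ, ∀ y, (∫ t, k₂ y t * (tensLp μ ν φ g) (x, t) ∂ν)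
      = φ x * (∫ t, k₂ y t * g t ∂ν) := by
    filter_upwards [hsl] with x hx y
    rw [← integral_const_mul]
    apply integral_congr_ae
    filter_upwards [hx] with t ht
    rw [ht]; ring
  have h2 : ∀ᵐ z ∂μ.prod ν, (∫ t, k₂ z.2 t * (tensLp μ ν φ g) (z.1, t) ∂ν)
      = φ z.1 * (∫ t, k₂ z.2 t * g t ∂ν) := by
    filter_upwards [Measure.quasiMeasurePreserving_fst.ae h3] with z hz
    exact hz z.2
  have h4 : ∀ᵐ z ∂μ.prod ν, (K₂ g) z.2 = ∫ t, k₂ z.2 t * g t ∂ν :=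
    Measure.quasiMeasurePreserving_snd.ae (hK₂ g)
  filter_upwards [hT₂ (tensLp μ ν φ g), h2, tensLp_coe μ ν φ (K₂ g), h4] with z e1 e2 e3 e4
  rw [e1, e2, e3, e4]

set_option linter.unusedSectionVars false in
lemma aux_slice_eig₁ (k₁ : X → X → ℂ)
    (K₁ : Lp ℂ 2 μ →L[ℂ] Lp ℂ 2 μ) (T₁ : Lp ℂ 2 (μ.prod ν) →L[ℂ] Lp ℂ 2 (μ.prod ν))
    (hK₁ : ∀ φ : Lp ℂ 2 μ, (⇑(K₁ φ) : X → ℂ) =ᵐ[μ] fun x => ∫ s, k₁ x s * φ s ∂μ)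
    (hT₁ : ∀ f : Lp ℂ 2 (μ.prod ν),
      (⇑(T₁ f)) =ᵐ[μ.prod ν] fun p => ∫ s, k₁ p.1 s * f (s, p.2) ∂μ)
    {f : Lp ℂ 2 (μ.prod ν)} (hf : f ≠ 0) {z : ℂ} (heq : T₁ f = z • f) :
    Module.End.HasEigenvalue (↑K₁ : Lp ℂ 2 μ →ₗ[ℂ] Lp ℂ 2 μ) z := by
  have h0 : ∀ᵐ p ∂μ.prod ν, (∫ s, k₁ p.1 s * f (s, p.2) ∂μ) = z * f p := by
    have e1 := hT₁ f
    have e2 : ⇑(T₁ f) =ᵐ[μ.prod ν] fun p => z * f p := by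
      rw [heq]
      filter_upwards [Lp.coeFn_smul z f] with p hp
      simpa using hp
    exact e1.symm.trans e2
  have h1 : ∀ᵐ y ∂ν, ∀ᵐ x ∂μ, (∫ s, k₁ x s * f (s, y) ∂μ) = z * f (x, y) :=
    aux_ae_swap μ ν h0
  have hfint : Integrable (⇑f) (μ.prod ν) := (Lp.memLp f).integrable one_le_two
  have hfsq : Integrable (fun p => ‖f p‖ ^ 2) (μ.prod ν) :=
    (memLp_two_iff_integrable_sq_norm (Lp.aestronglyMeasurable f)).1 (Lp.memLp f)
  have hmem : ∀ᵐ y ∂ν, MemLp (fun x => f (x, y)) 2 μ := by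
    filter_upwards [hfint.prod_left_ae, hfsq.prod_left_ae] with y hy1 hy2
    exact (memLp_two_iff_integrable_sq_norm hy1.aestronglyMeasurable).2 hy2
  have hex : ∃ y, MemLp (fun x => f (x, y)) 2 μ ∧
      (∀ᵐ x ∂μ, (∫ s, k₁ x s * f (s, y) ∂μ) = z * f (x, y)) ∧
      ¬ ((fun x => f (x, y)) =ᵐ[μ] 0) := by
    by_contra hcon
    push_neg at hcon
    have hzero : ∀ᵐ y ∂ν, (fun x => f (x, y)) =ᵐ[μ] 0 := by
      filter_upwards [hmem, h1] with y hy1 hy2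
      exact hcon y hy1 hy2
    apply hf
    have hcoe : ⇑f =ᵐ[μ.prod ν] 0 := by
      have hsq0 : ∫⁻ p, (‖f p‖₊ : ℝ≥0∞) ∂μ.prod ν = 0 := by
        rw [MeasureTheory.lintegral_prod_symm (fun p => (‖f p‖₊ : ℝ≥0∞)) (Lp.aestronglyMeasurable f).enorm]
        have hinner : ∀ᵐ y ∂ν, ∫⁻ x, (‖f (x, y)‖₊ : ℝ≥0∞) ∂μ = 0 := by
          filter_upwards [hzero] with y hy
          have : (fun x => (‖f (x, y)‖₊ : ℝ≥0∞)) =ᵐ[μ] 0 := by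
            filter_upwards [hy] with x hx
            simp only [Pi.zero_apply] at hx ⊢
            simp [hx]
          rw [lintegral_congr_ae this]
          simp
        rw [lintegral_congr_ae hinner, lintegral_zero]
      have := (lintegral_eq_zero_iff' (f := fun p => (‖f p‖₊ : ℝ≥0∞)) (Lp.aestronglyMeasurable f).enorm).1 hsq0
      filter_upwards [this] with p hp
      simpa using hp
    apply Lp.ext
    exact hcoe.trans (Lp.coeFn_zero ℂ 2 (μ.prod ν)).symm
  obtain ⟨y₀, hy₀mem, hy₀eq, hy₀ne⟩ := hex
  set φy := hy₀mem.toLp _ with hφy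
  have hcoeφ : ⇑φy =ᵐ[μ] fun x => f (x, y₀) := MemLp.coeFn_toLp _
  have hφne : φy ≠ 0 := by
    intro h0'
    apply hy₀ne
    have hz : ⇑φy =ᵐ[μ] 0 := by rw [h0']; exact Lp.coeFn_zero ℂ 2 μ
    exact hcoeφ.symm.trans hz
  have heig : K₁ φy = z • φy := by
    apply Lp.ext
    have e2 : ∀ x, (∫ s, k₁ x s * φy s ∂μ) = ∫ s, k₁ x s * f (s, y₀) ∂μ := by
      intro x
      apply integral_congr_ae
      filter_upwards [hcoeφ] with s hs
      rw [hs]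
    filter_upwards [hK₁ φy, hy₀eq, Lp.coeFn_smul z φy, hcoeφ] with x e1x e2x e3x e4x
    rw [e1x, e2 x, e2x, e3x]
    simp [e4x]
  exact Module.End.hasEigenvalue_of_hasEigenvector
    ⟨Module.End.mem_eigenspace_iff.2 (by simpa using heig), hφne⟩

set_option linter.unusedSectionVars false in
lemma aux_slice_eig₂ (k₂ : Y → Y → ℂ)
    (K₂ : Lp ℂ 2 ν →L[ℂ] Lp ℂ 2 ν) (T₂ : Lp ℂ 2 (μ.prod ν) →L[ℂ] Lp ℂ 2 (μ.prod ν))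
    (hK₂ : ∀ g : Lp ℂ 2 ν, (⇑(K₂ g) : Y → ℂ) =ᵐ[ν] fun y => ∫ t, k₂ y t * g t ∂ν)
    (hT₂ : ∀ f : Lp ℂ 2 (μ.prod ν),
      (⇑(T₂ f)) =ᵐ[μ.prod ν] fun p => ∫ t, k₂ p.2 t * f (p.1, t) ∂ν)
    {f : Lp ℂ 2 (μ.prod ν)} (hf : f ≠ 0) {z : ℂ} (heq : T₂ f = z • f) :
    Module.End.HasEigenvalue (↑K₂ : Lp ℂ 2 ν →ₗ[ℂ] Lp ℂ 2 ν) z := by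
  have h0 : ∀ᵐ p ∂μ.prod ν, (∫ t, k₂ p.2 t * f (p.1, t) ∂ν) = z * f p := by
    have e1 := hT₂ f
    have e2 : ⇑(T₂ f) =ᵐ[μ.prod ν] fun p => z * f p := by
      rw [heq]
      filter_upwards [Lp.coeFn_smul z f] with p hp
      simpa using hp
    exact e1.symm.trans e2
  have h1 : ∀ᵐ x ∂μ, ∀ᵐ y ∂ν, (∫ t, k₂ y t * f (x, t) ∂ν) = z * f (x, y) :=
    MeasureTheory.Measure.ae_ae_of_ae_prod h0
  have hfint : Integrable (⇑f) (μ.prod ν) := (Lp.memLp f).integrable one_le_two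
  have hfsq : Integrable (fun p => ‖f p‖ ^ 2) (μ.prod ν) :=
    (memLp_two_iff_integrable_sq_norm (Lp.aestronglyMeasurable f)).1 (Lp.memLp f)
  have hmem : ∀ᵐ x ∂μ, MemLp (fun y => f (x, y)) 2 ν := by
    filter_upwards [hfint.prod_right_ae, hfsq.prod_right_ae] with x hy1 hy2
    exact (memLp_two_iff_integrable_sq_norm hy1.aestronglyMeasurable).2 hy2
  have hex : ∃ x, MemLp (fun y => f (x, y)) 2 ν ∧
      (∀ᵐ y ∂ν, (∫ t, k₂ y t * f (x, t) ∂ν) = z * f (x, y)) ∧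
      ¬ ((fun y => f (x, y)) =ᵐ[ν] 0) := by
    by_contra hcon
    push_neg at hcon
    have hzero : ∀ᵐ x ∂μ, (fun y => f (x, y)) =ᵐ[ν] 0 := by
      filter_upwards [hmem, h1] with x hy1 hy2
      exact hcon x hy1 hy2
    apply hf
    have hcoe : ⇑f =ᵐ[μ.prod ν] 0 := by
      have hsq0 : ∫⁻ p, (‖f p‖₊ : ℝ≥0∞) ∂μ.prod ν = 0 := by
        rw [MeasureTheory.lintegral_prod (fun p => (‖f p‖₊ : ℝ≥0∞)) (Lp.aestronglyMeasurable f).enorm]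
        have hinner : ∀ᵐ x ∂μ, ∫⁻ y, (‖f (x, y)‖₊ : ℝ≥0∞) ∂ν = 0 := by
          filter_upwards [hzero] with x hx
          have : (fun y => (‖f (x, y)‖₊ : ℝ≥0∞)) =ᵐ[ν] 0 := by
            filter_upwards [hx] with y hy
            simp only [Pi.zero_apply] at hy ⊢
            simp [hy]
          rw [lintegral_congr_ae this]
          simp
        rw [lintegral_congr_ae hinner, lintegral_zero]
      have := (lintegral_eq_zero_iff' (f := fun p => (‖f p‖₊ : ℝ≥0∞)) (Lp.aestronglyMeasurable f).enorm).1 hsq0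
      filter_upwards [this] with p hp
      simpa using hp
    apply Lp.ext
    exact hcoe.trans (Lp.coeFn_zero ℂ 2 (μ.prod ν)).symm
  obtain ⟨x₀, hx₀mem, hx₀eq, hx₀ne⟩ := hex
  set gy := hx₀mem.toLp _ with hgy
  have hcoeg : ⇑gy =ᵐ[ν] fun y => f (x₀, y) := MemLp.coeFn_toLp _
  have hgne : gy ≠ 0 := by
    intro h0'
    apply hx₀ne
    have hz : ⇑gy =ᵐ[ν] 0 := by rw [h0']; exact Lp.coeFn_zero ℂ 2 ν
    exact hcoeg.symm.trans hz
  have heig : K₂ gy = z • gy := by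
    apply Lp.ext
    have e2 : ∀ y, (∫ t, k₂ y t * gy t ∂ν) = ∫ t, k₂ y t * f (x₀, t) ∂ν := by
      intro y
      apply integral_congr_ae
      filter_upwards [hcoeg] with t ht
      rw [ht]
    filter_upwards [hK₂ gy, hx₀eq, Lp.coeFn_smul z gy, hcoeg] with y e1y e2y e3y e4y
    rw [e1y, e2 y, e2y, e3y]
    simp [e4y]
  exact Module.End.hasEigenvalue_of_hasEigenvector
    ⟨Module.End.mem_eigenspace_iff.2 (by simpa using heig), hgne⟩

set_option linter.unusedSectionVars false in
lemma aux_commute (k₁ : X → X → ℂ) (k₂ : Y → Y → ℂ)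
    (T₁ T₂ : Lp ℂ 2 (μ.prod ν) →L[ℂ] Lp ℂ 2 (μ.prod ν))
    (hT₁ : ∀ f : Lp ℂ 2 (μ.prod ν),
      (⇑(T₁ f)) =ᵐ[μ.prod ν] fun p => ∫ s, k₁ p.1 s * f (s, p.2) ∂μ)
    (hT₂ : ∀ f : Lp ℂ 2 (μ.prod ν),
      (⇑(T₂ f)) =ᵐ[μ.prod ν] fun p => ∫ t, k₂ p.2 t * f (p.1, t) ∂ν)
    (M₁ M₂ : ℝ) (hM₁ : ∀ x s, ‖k₁ x s‖ ≤ M₁) (hM₂ : ∀ y t, ‖k₂ y t‖ ≤ M₂)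
    (hm₁ : ∀ x : X, AEStronglyMeasurable (fun s => k₁ x s) μ)
    (hm₂ : ∀ y : Y, AEStronglyMeasurable (fun t => k₂ y t) ν)
    (f : Lp ℂ 2 (μ.prod ν)) : T₁ (T₂ f) = T₂ (T₁ f) := by
  apply Lp.ext
  have hfint : Integrable (⇑f) (μ.prod ν) := (Lp.memLp f).integrable one_le_two
  have hsl₂ : ∀ᵐ y ∂ν, ∀ᵐ s ∂μ, (T₂ f) (s, y) = ∫ t, k₂ y t * f (s, t) ∂ν :=
    aux_ae_swap μ ν (hT₂ f)
  have hL : ⇑(T₁ (T₂ f)) =ᵐ[μ.prod ν]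
      fun p => ∫ s, k₁ p.1 s * (∫ t, k₂ p.2 t * f (s, t) ∂ν) ∂μ := by
    have h3 : ∀ᵐ y ∂ν, ∀ x, (∫ s, k₁ x s * (T₂ f) (s, y) ∂μ)
        = ∫ s, k₁ x s * (∫ t, k₂ y t * f (s, t) ∂ν) ∂μ := by
      filter_upwards [hsl₂] with y hy x
      apply integral_congr_ae
      filter_upwards [hy] with s hs
      rw [hs]
    have h2 := (Measure.quasiMeasurePreserving_snd (μ := μ) (ν := ν)).ae h3
    filter_upwards [hT₁ (T₂ f), h2] with p e1 e2
    rw [e1, e2 p.1]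
  have hsl₁ : ∀ᵐ x ∂μ, ∀ᵐ t ∂ν, (T₁ f) (x, t) = ∫ s, k₁ x s * f (s, t) ∂μ :=
    MeasureTheory.Measure.ae_ae_of_ae_prod (hT₁ f)
  have hR : ⇑(T₂ (T₁ f)) =ᵐ[μ.prod ν]
      fun p => ∫ t, k₂ p.2 t * (∫ s, k₁ p.1 s * f (s, t) ∂μ) ∂ν := by
    have h3 : ∀ᵐ x ∂μ, ∀ y, (∫ t, k₂ y t * (T₁ f) (x, t) ∂ν)
        = ∫ t, k₂ y t * (∫ s, k₁ x s * f (s, t) ∂μ) ∂ν := by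
      filter_upwards [hsl₁] with x hx y
      apply integral_congr_ae
      filter_upwards [hx] with t ht
      rw [ht]
    have h2 := (Measure.quasiMeasurePreserving_fst (μ := μ) (ν := ν)).ae h3
    filter_upwards [hT₂ (T₁ f), h2] with p e1 e2
    rw [e1, e2 p.2]
  have hfub : ∀ p : X × Y, (∫ s, k₁ p.1 s * (∫ t, k₂ p.2 t * f (s, t) ∂ν) ∂μ)
      = ∫ t, k₂ p.2 t * (∫ s, k₁ p.1 s * f (s, t) ∂μ) ∂ν := by
    rintro ⟨x, y⟩
    have hint : Integrable (Function.uncurry fun s t => k₁ x s * (k₂ y t * f (s, t)))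
        (μ.prod ν) := by
      apply Integrable.mono' ((hfint.norm.const_mul M₂).const_mul M₁)
      · exact (((hm₁ x).comp_quasiMeasurePreserving Measure.quasiMeasurePreserving_fst).mul
          (((hm₂ y).comp_quasiMeasurePreserving Measure.quasiMeasurePreserving_snd).mul
            (Lp.aestronglyMeasurable f)))
      · apply Eventually.of_forall
        rintro ⟨s, t⟩
        simp only [Function.uncurry]
        rw [norm_mul, norm_mul]
        have h1 := hM₁ x s
        have h2 := hM₂ y t
        have hn : (0:ℝ) ≤ ‖f (s, t)‖ := norm_nonneg _
        have h2' : ‖k₂ y t‖ * ‖f (s, t)‖ ≤ M₂ * ‖f (s, t)‖ :=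
          mul_le_mul_of_nonneg_right h2 hn
        exact mul_le_mul h1 h2' (by positivity) (le_trans (norm_nonneg _) h1)
    have hswap := MeasureTheory.integral_integral_swap
      (f := fun s t => k₁ x s * (k₂ y t * f (s, t))) hint
    calc ∫ s, k₁ x s * (∫ t, k₂ y t * f (s, t) ∂ν) ∂μ
        = ∫ s, ∫ t, k₁ x s * (k₂ y t * f (s, t)) ∂ν ∂μ := by
          simp_rw [integral_const_mul]
      _ = ∫ t, ∫ s, k₁ x s * (k₂ y t * f (s, t)) ∂μ ∂ν := hswap
      _ = ∫ t, k₂ y t * (∫ s, k₁ x s * f (s, t) ∂μ) ∂ν := by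
          simp_rw [show ∀ s t, k₁ x s * (k₂ y t * f (s, t))
            = k₂ y t * (k₁ x s * f (s, t)) from fun s t => by ring]
          simp_rw [integral_const_mul]
  filter_upwards [hL, hR] with p e1 e2
  rw [e1, hfub p, ← e2]

end KernelAux

section Setting

variable {d₁ d₂ : ℕ}
  {Ω₁ : Set (EuclideanSpace ℝ (Fin d₁))} {Ω₂ : Set (EuclideanSpace ℝ (Fin d₂))}

set_option maxHeartbeats 2000000 in
/-- **Proposition 3.1 (в).** `|σ_d(T)| ≤ |σ_d(K₁)| ⬝ |σ_d(K₂)|`. -/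
theorem card_discreteSpectrum_T
    (ν₁ : Measure Ω₁) (ν₂ : Measure Ω₂) [IsFiniteMeasure ν₁] [IsFiniteMeasure ν₂]
    (k₁ : Ω₁ → Ω₁ → ℂ) (k₂ : Ω₂ → Ω₂ → ℂ)
    (K₁ : Lp ℂ 2 ν₁ →L[ℂ] Lp ℂ 2 ν₁) (K₂ : Lp ℂ 2 ν₂ →L[ℂ] Lp ℂ 2 ν₂)
    (T₁ T₂ : Lp ℂ 2 (ν₁.prod ν₂) →L[ℂ] Lp ℂ 2 (ν₁.prod ν₂))
    (hΩ₁ : IsCompact Ω₁) (hΩ₂ : IsCompact Ω₂)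
    (hk₁c : Continuous fun p : Ω₁ × Ω₁ => k₁ p.1 p.2)
    (hk₂c : Continuous fun p : Ω₂ × Ω₂ => k₂ p.1 p.2)
    (hk₁h : ∀ x s, k₁ x s = starRingEnd ℂ (k₁ s x))
    (hk₂h : ∀ y t, k₂ y t = starRingEnd ℂ (k₂ t y))
    (hK₁ : ∀ φ : Lp ℂ 2 ν₁, (K₁ φ : Ω₁ → ℂ) =ᵐ[ν₁] fun x => ∫ s, k₁ x s * φ s ∂ν₁)
    (hK₂ : ∀ φ : Lp ℂ 2 ν₂, (K₂ φ : Ω₂ → ℂ) =ᵐ[ν₂] fun y => ∫ t, k₂ y t * φ t ∂ν₂)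
    (hK₁sa : IsSelfAdjoint K₁) (hK₂sa : IsSelfAdjoint K₂)
    (hK₁cpt : IsCompactOperator K₁) (hK₂cpt : IsCompactOperator K₂)
    (hT₁ : ∀ f : Lp ℂ 2 (ν₁.prod ν₂),
      (T₁ f : Ω₁ × Ω₂ → ℂ) =ᵐ[ν₁.prod ν₂] fun p => ∫ s, k₁ p.1 s * f (s, p.2) ∂ν₁)
    (hT₂ : ∀ f : Lp ℂ 2 (ν₁.prod ν₂),
      (T₂ f : Ω₁ × Ω₂ → ℂ) =ᵐ[ν₁.prod ν₂] fun p => ∫ t, k₂ p.2 t * f (p.1, t) ∂ν₂)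
    (hinf₁ : ¬ FiniteDimensional ℂ (Lp ℂ 2 ν₁))
    (hinf₂ : ¬ FiniteDimensional ℂ (Lp ℂ 2 ν₂)) :
    Cardinal.mk (discreteSpectrum (T₁ + T₂)) ≤
      Cardinal.mk (discreteSpectrum K₁) * Cardinal.mk (discreteSpectrum K₂) := by
  classical
  haveI : CompactSpace Ω₁ := isCompact_iff_compactSpace.mp hΩ₁
  haveI : CompactSpace Ω₂ := isCompact_iff_compactSpace.mp hΩ₂
  obtain ⟨M₁, hM₁⟩ : ∃ M, ∀ (x s : Ω₁), ‖k₁ x s‖ ≤ M := by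
    obtain ⟨M, hM⟩ := isCompact_univ.exists_bound_of_continuousOn hk₁c.continuousOn
    exact ⟨M, fun x s => hM (x, s) (Set.mem_univ _)⟩
  obtain ⟨M₂, hM₂⟩ : ∃ M, ∀ (y t : Ω₂), ‖k₂ y t‖ ≤ M := by
    obtain ⟨M, hM⟩ := isCompact_univ.exists_bound_of_continuousOn hk₂c.continuousOn
    exact ⟨M, fun y t => hM (y, t) (Set.mem_univ _)⟩
  have hm₁ : ∀ x : Ω₁, AEStronglyMeasurable (fun s => k₁ x s) ν₁ := fun x =>
    (hk₁c.comp (continuous_const.prodMk continuous_id)).aestronglyMeasurable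
  have hm₂ : ∀ y : Ω₂, AEStronglyMeasurable (fun t => k₂ y t) ν₂ := fun y =>
    (hk₂c.comp (continuous_const.prodMk continuous_id)).aestronglyMeasurable
  have key : ∀ lam ∈ discreteSpectrum (T₁ + T₂),
      ∃ q : ℂ × ℂ, q.1 ∈ discreteSpectrum K₁ ∧ q.2 ∈ discreteSpectrum K₂ ∧ q.1 + q.2 = lam := by
    rintro lam ⟨hiso, heig, hfd⟩
    have hcomm : ∀ f, T₁ (T₂ f) = T₂ (T₁ f) :=
      aux_commute ν₁ ν₂ k₁ k₂ T₁ T₂ hT₁ hT₂ M₁ M₂ hM₁ hM₂ hm₁ hm₂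
    set E := Module.End.eigenspace
      (↑(T₁ + T₂) : Lp ℂ 2 (ν₁.prod ν₂) →ₗ[ℂ] Lp ℂ 2 (ν₁.prod ν₂)) lam with hE
    have hmemE : ∀ u, u ∈ E ↔ T₁ u + T₂ u = lam • u := by
      intro u
      rw [hE, Module.End.mem_eigenspace_iff]
      simp
    have hinv : ∀ u ∈ E,
        (↑T₁ : Lp ℂ 2 (ν₁.prod ν₂) →ₗ[ℂ] Lp ℂ 2 (ν₁.prod ν₂)) u ∈ E := by
      intro u hu
      have hu' := (hmemE u).mp hu
      apply (hmemE _).mpr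
      show T₁ (T₁ u) + T₂ (T₁ u) = lam • (T₁ u)
      rw [← hcomm u, ← map_add, hu', T₁.map_smul]
    haveI hFD : FiniteDimensional ℂ E := hfd
    haveI : Nontrivial E := Submodule.nontrivial_iff_ne_bot.mpr heig
    obtain ⟨μ₁, hμ₁⟩ := Module.End.exists_eigenvalue
      ((↑T₁ : Lp ℂ 2 (ν₁.prod ν₂) →ₗ[ℂ] Lp ℂ 2 (ν₁.prod ν₂)).restrict hinv)
    obtain ⟨v, hv⟩ := hμ₁.exists_hasEigenvector
    have hvne : (v : Lp ℂ 2 (ν₁.prod ν₂)) ≠ 0 := by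
      intro h
      exact hv.2 (Subtype.ext (by simpa using h))
    have hT₁v : T₁ (v : Lp ℂ 2 (ν₁.prod ν₂)) = μ₁ • (v : Lp ℂ 2 (ν₁.prod ν₂)) := by
      have h1 := Module.End.mem_eigenspace_iff.mp hv.1
      have h2 := congrArg (Subtype.val) h1
      simpa [LinearMap.restrict_apply] using h2
    have hTv : T₁ (v : Lp ℂ 2 (ν₁.prod ν₂)) + T₂ (v : Lp ℂ 2 (ν₁.prod ν₂))
        = lam • (v : Lp ℂ 2 (ν₁.prod ν₂)) := (hmemE _).mp v.2
    have hT₂v : T₂ (v : Lp ℂ 2 (ν₁.prod ν₂)) = (lam - μ₁) • (v : Lp ℂ 2 (ν₁.prod ν₂)) := by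
      rw [hT₁v] at hTv
      rw [sub_smul, ← hTv]
      abel
    have he₁ : Module.End.HasEigenvalue (↑K₁ : Lp ℂ 2 ν₁ →ₗ[ℂ] Lp ℂ 2 ν₁) μ₁ :=
      aux_slice_eig₁ ν₁ ν₂ k₁ K₁ T₁ hK₁ hT₁ hvne hT₁v
    have he₂ : Module.End.HasEigenvalue (↑K₂ : Lp ℂ 2 ν₂ →ₗ[ℂ] Lp ℂ 2 ν₂) (lam - μ₁) :=
      aux_slice_eig₂ ν₁ ν₂ k₂ K₂ T₂ hK₂ hT₂ hvne hT₂v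
    obtain ⟨φ0, hφ0⟩ := he₁.exists_hasEigenvector
    obtain ⟨g0, hg0⟩ := he₂.exists_hasEigenvector
    have hφ0eq : K₁ φ0 = μ₁ • φ0 := by
      simpa using Module.End.mem_eigenspace_iff.mp hφ0.1
    have hg0eq : K₂ g0 = (lam - μ₁) • g0 := by
      simpa using Module.End.mem_eigenspace_iff.mp hg0.1
    have htensmem : ∀ (φ : Lp ℂ 2 ν₁) (g : Lp ℂ 2 ν₂),
        K₁ φ = μ₁ • φ → K₂ g = (lam - μ₁) • g → tensLp ν₁ ν₂ φ g ∈ E := by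
      intro φ g h1 h2
      apply (hmemE _).mpr
      rw [aux_T₁_tens ν₁ ν₂ k₁ K₁ T₁ hK₁ hT₁, aux_T₂_tens ν₁ ν₂ k₂ K₂ T₂ hK₂ hT₂, h1, h2,
        tensLp_smul_left, tensLp_smul_right, ← add_smul]
      congr 1
      ring
    have hfd₁ : FiniteDimensional ℂ
        (Module.End.eigenspace (↑K₁ : Lp ℂ 2 ν₁ →ₗ[ℂ] Lp ℂ 2 ν₁) μ₁) := by
      let J : Module.End.eigenspace (↑K₁ : Lp ℂ 2 ν₁ →ₗ[ℂ] Lp ℂ 2 ν₁) μ₁ →ₗ[ℂ] E :=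
        { toFun := fun φ => ⟨tensLp ν₁ ν₂ φ.1 g0,
            htensmem φ.1 g0 (by simpa using Module.End.mem_eigenspace_iff.mp φ.2) hg0eq⟩
          map_add' := by
            intro a b
            apply Subtype.ext
            simp [tensLp_add_left]
          map_smul' := by
            intro c a
            apply Subtype.ext
            simp [tensLp_smul_left] }
      have hJinj : Function.Injective J := by
        intro a b hab
        have habv : tensLp ν₁ ν₂ a.1 g0 = tensLp ν₁ ν₂ b.1 g0 := congrArg Subtype.val hab
        have h1 : tensLp ν₁ ν₂ (a.1 - b.1) g0 = 0 := by
          rw [tensLp_sub_left, habv, sub_self]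
        have h2 := tensLp_eq_zero_left ν₁ ν₂ hg0.2 h1
        exact Subtype.ext (by rwa [sub_eq_zero] at h2)
      exact FiniteDimensional.of_injective J hJinj
    have hfd₂ : FiniteDimensional ℂ
        (Module.End.eigenspace (↑K₂ : Lp ℂ 2 ν₂ →ₗ[ℂ] Lp ℂ 2 ν₂) (lam - μ₁)) := by
      let J : Module.End.eigenspace (↑K₂ : Lp ℂ 2 ν₂ →ₗ[ℂ] Lp ℂ 2 ν₂) (lam - μ₁) →ₗ[ℂ] E :=
        { toFun := fun g => ⟨tensLp ν₁ ν₂ φ0 g.1,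
            htensmem φ0 g.1 hφ0eq (by simpa using Module.End.mem_eigenspace_iff.mp g.2)⟩
          map_add' := by
            intro a b
            apply Subtype.ext
            simp [tensLp_add_right]
          map_smul' := by
            intro c a
            apply Subtype.ext
            simp [tensLp_smul_right] }
      have hJinj : Function.Injective J := by
        intro a b hab
        have habv : tensLp ν₁ ν₂ φ0 a.1 = tensLp ν₁ ν₂ φ0 b.1 := congrArg Subtype.val hab
        have h1 : tensLp ν₁ ν₂ φ0 (a.1 - b.1) = 0 := by
          rw [tensLp_sub_right, habv, sub_self]
        have h2 := tensLp_eq_zero_right ν₁ ν₂ hφ0.2 h1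
        exact Subtype.ext (by rwa [sub_eq_zero] at h2)
      exact FiniteDimensional.of_injective J hJinj
    obtain ⟨ε, hε, hball⟩ := hiso.2
    have hsub₁ : ∀ z ∈ spectrum ℂ K₁, z ∈ Metric.ball μ₁ ε → z = μ₁ := by
      intro z hz hzball
      have hzT : (z + (lam - μ₁)) ∈ spectrum ℂ (T₁ + T₂) := by
        apply aux_mem_spectrum_of_approx (norm_pos_iff.2 hg0.2)
        intro δ hδ
        obtain ⟨u, hu1, hu2⟩ := aux_exists_approx hK₁sa hz
          (show (0:ℝ) < δ / (‖g0‖ + 1) by positivity)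
        refine ⟨tensLp ν₁ ν₂ u g0, ?_, ?_⟩
        · rw [tensLp_norm, hu1, one_mul]
        · have hcalc : (T₁ + T₂) (tensLp ν₁ ν₂ u g0)
              - (z + (lam - μ₁)) • tensLp ν₁ ν₂ u g0
              = tensLp ν₁ ν₂ (K₁ u - z • u) g0 := by
            rw [ContinuousLinearMap.add_apply,
              aux_T₁_tens ν₁ ν₂ k₁ K₁ T₁ hK₁ hT₁, aux_T₂_tens ν₁ ν₂ k₂ K₂ T₂ hK₂ hT₂,
              hg0eq, tensLp_smul_right, tensLp_sub_left, tensLp_smul_left, add_smul]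
            abel
          rw [hcalc, tensLp_norm]
          calc ‖K₁ u - z • u‖ * ‖g0‖ ≤ (δ / (‖g0‖ + 1)) * ‖g0‖ :=
                mul_le_mul_of_nonneg_right hu2.le (norm_nonneg _)
            _ ≤ δ := by
                have ht : (0:ℝ) ≤ δ / (‖g0‖ + 1) := by positivity
                have hcancel : δ / (‖g0‖ + 1) * (‖g0‖ + 1) = δ :=
                  div_mul_cancel₀ δ (by positivity)
                nlinarith [norm_nonneg g0]
      have hmem2 : z + (lam - μ₁) ∈ spectrum ℂ (T₁ + T₂) ∩ Metric.ball lam ε := by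
        refine ⟨hzT, ?_⟩
        rw [Metric.mem_ball] at hzball ⊢
        have : dist (z + (lam - μ₁)) lam = dist z μ₁ := by
          rw [Complex.dist_eq, Complex.dist_eq]
          congr 1
          ring
        rwa [this]
      rw [hball] at hmem2
      have := Set.mem_singleton_iff.mp hmem2
      linear_combination this
    have hiso₁ : IsIsolatedIn (spectrum ℂ K₁) μ₁ := by
      refine ⟨aux_mem_spectrum_of_hasEigenvalue he₁, ε, hε, ?_⟩
      apply Set.eq_singleton_iff_unique_mem.mpr
      exact ⟨⟨aux_mem_spectrum_of_hasEigenvalue he₁, Metric.mem_ball_self hε⟩,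
        fun z hz => hsub₁ z hz.1 hz.2⟩
    have hsub₂ : ∀ z ∈ spectrum ℂ K₂, z ∈ Metric.ball (lam - μ₁) ε → z = lam - μ₁ := by
      intro z hz hzball
      have hzT : (μ₁ + z) ∈ spectrum ℂ (T₁ + T₂) := by
        apply aux_mem_spectrum_of_approx (norm_pos_iff.2 hφ0.2)
        intro δ hδ
        obtain ⟨u, hu1, hu2⟩ := aux_exists_approx hK₂sa hz
          (show (0:ℝ) < δ / (‖φ0‖ + 1) by positivity)
        refine ⟨tensLp ν₁ ν₂ φ0 u, ?_, ?_⟩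
        · rw [tensLp_norm, hu1, mul_one]
        · have hcalc : (T₁ + T₂) (tensLp ν₁ ν₂ φ0 u)
              - (μ₁ + z) • tensLp ν₁ ν₂ φ0 u
              = tensLp ν₁ ν₂ φ0 (K₂ u - z • u) := by
            rw [ContinuousLinearMap.add_apply,
              aux_T₁_tens ν₁ ν₂ k₁ K₁ T₁ hK₁ hT₁, aux_T₂_tens ν₁ ν₂ k₂ K₂ T₂ hK₂ hT₂,
              hφ0eq, tensLp_smul_left, tensLp_sub_right, tensLp_smul_right, add_smul]
            abel
          rw [hcalc, tensLp_norm]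
          calc ‖φ0‖ * ‖K₂ u - z • u‖ ≤ ‖φ0‖ * (δ / (‖φ0‖ + 1)) :=
                mul_le_mul_of_nonneg_left hu2.le (norm_nonneg _)
            _ ≤ δ := by
                have ht : (0:ℝ) ≤ δ / (‖φ0‖ + 1) := by positivity
                have hcancel : δ / (‖φ0‖ + 1) * (‖φ0‖ + 1) = δ :=
                  div_mul_cancel₀ δ (by positivity)
                nlinarith [norm_nonneg φ0]
      have hmem2 : μ₁ + z ∈ spectrum ℂ (T₁ + T₂) ∩ Metric.ball lam ε := by
        refine ⟨hzT, ?_⟩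
        rw [Metric.mem_ball] at hzball ⊢
        have : dist (μ₁ + z) lam = dist z (lam - μ₁) := by
          rw [Complex.dist_eq, Complex.dist_eq]
          congr 1
          ring
        rwa [this]
      rw [hball] at hmem2
      have := Set.mem_singleton_iff.mp hmem2
      linear_combination this
    have hiso₂ : IsIsolatedIn (spectrum ℂ K₂) (lam - μ₁) := by
      refine ⟨aux_mem_spectrum_of_hasEigenvalue he₂, ε, hε, ?_⟩
      apply Set.eq_singleton_iff_unique_mem.mpr
      exact ⟨⟨aux_mem_spectrum_of_hasEigenvalue he₂, Metric.mem_ball_self hε⟩,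
        fun z hz => hsub₂ z hz.1 hz.2⟩
    exact ⟨(μ₁, lam - μ₁), ⟨hiso₁, he₁, hfd₁⟩, ⟨hiso₂, he₂, hfd₂⟩, by ring⟩
  choose q hq1 hq2 hq3 using key
  have hFinj : Function.Injective
      (fun x : ↥(discreteSpectrum (T₁ + T₂)) =>
        ((⟨(q x.1 x.2).1, hq1 x.1 x.2⟩, ⟨(q x.1 x.2).2, hq2 x.1 x.2⟩) :
          ↥(discreteSpectrum K₁) × ↥(discreteSpectrum K₂))) := by
    intro a b hab
    apply Subtype.ext
    have h1 : (q a.1 a.2).1 = (q b.1 b.2).1 := congrArg (fun r => (r.1.1 : ℂ)) hab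
    have h2 : (q a.1 a.2).2 = (q b.1 b.2).2 := congrArg (fun r => (r.2.1 : ℂ)) hab
    rw [← hq3 a.1 a.2, ← hq3 b.1 b.2, h1, h2]
  calc Cardinal.mk ↥(discreteSpectrum (T₁ + T₂))
      ≤ Cardinal.mk (↥(discreteSpectrum K₁) × ↥(discreteSpectrum K₂)) :=
        Cardinal.mk_le_of_injective hFinj
    _ = Cardinal.mk ↥(discreteSpectrum K₁) * Cardinal.mk ↥(discreteSpectrum K₂) := by
        rw [Cardinal.mk_prod, Cardinal.lift_id, Cardinal.lift_id]

end Setting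

end
end

section
/- Assume L²(Ω₁,ν₁) and L²(Ω₂,ν₂) are infinite-dimensional, k₀ ≥ 0 on Ω₁×Ω₂ with k₀(x₀,y₀) = 0 for some point (x₀,y₀), and K₁ ≥ 0, K₂ ≥ 0 as operators. Let η₀ = sup σ_e(T). If H₀ ≥ (E_min(H) + η₀)·I (as bounded self-adjoint operators on L²(Ω₁×Ω₂)) and the discrete spectrum σ_d(T) of T is finite, then the set of eigenvalues of H lying strictly below E_min(H) is finite, and their total multiplicity is finite. -/
open MeasureTheory Filter Topology Metric

noncomputable section

variable {𝓗 : Type*} [NormedAddCommGroup 𝓗] [InnerProductSpace ℂ 𝓗]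

section AuxSpec
variable [CompleteSpace 𝓗]

/-- indicator of a single point -/
private def ptInd (μ : ℝ) : ℝ → ℝ := fun t => if t = μ then 1 else 0

lemma ptInd_continuousOn {S : Set ℝ} {μ : ℝ} (h : ∃ ε > 0, S ∩ Metric.ball μ ε ⊆ {μ}) :
    ContinuousOn (ptInd μ) S := by
  obtain ⟨ε, hε, hsub⟩ := h
  intro x hx
  by_cases hxμ : x = μ
  · subst hxμ
    have h1 : ∀ᶠ t in 𝓝[S] x, ptInd x t = 1 := by
      filter_upwards [self_mem_nhdsWithin,
        mem_nhdsWithin_of_mem_nhds (Metric.ball_mem_nhds x hε)] with t htS htb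
      have : t = x := hsub ⟨htS, htb⟩
      simp [ptInd, this]
    have : ptInd x x = 1 := by simp [ptInd]
    rw [ContinuousWithinAt, this]
    exact Filter.Tendsto.congr' (h1.mono fun t ht => ht.symm) tendsto_const_nhds
  · have h1 : ∀ᶠ t in 𝓝[S] x, ptInd μ t = 0 := by
      have : ∀ᶠ t in 𝓝 x, t ≠ μ := isOpen_ne.eventually_mem hxμ
      filter_upwards [mem_nhdsWithin_of_mem_nhds this] with t ht
      simp [ptInd, ht]
    have : ptInd μ x = 0 := by simp [ptInd, hxμ]
    rw [ContinuousWithinAt, this]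
    exact Filter.Tendsto.congr' (h1.mono fun t ht => ht.symm) tendsto_const_nhds

lemma key_projection (A : 𝓗 →L[ℂ] 𝓗) (hA : IsSelfAdjoint A) (η : ℝ) (F : Finset ℝ)
    (hiso : ∀ μ ∈ F, ∃ ε > 0, spectrum ℝ A ∩ Metric.ball μ ε ⊆ {μ})
    (hfd : ∀ μ ∈ F, FiniteDimensional ℂ
      (Module.End.eigenspace (A : 𝓗 →ₗ[ℂ] 𝓗) ((μ : ℝ) : ℂ)))
    (hsp : ∀ x ∈ spectrum ℝ A, x ∉ F → x ≤ η) :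
    ∃ (P : 𝓗 →L[ℂ] 𝓗) (W : Submodule ℂ 𝓗), FiniteDimensional ℂ W ∧
      (∀ f, P f ∈ W) ∧ ∀ f, P f = 0 → (inner ℂ f (A f) : ℂ).re ≤ η * ‖f‖ ^ 2 := by
  classical
  have hcont : ∀ μ ∈ F, ContinuousOn (ptInd μ) (spectrum ℝ A) :=
    fun μ hμ => ptInd_continuousOn (hiso μ hμ)
  set P : 𝓗 →L[ℂ] 𝓗 := ∑ μ ∈ F, cfc (ptInd μ) A with hP
  -- each cfc (ptInd μ) A maps into the eigenspace of μ
  have heig : ∀ μ ∈ F, ∀ f : 𝓗,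
      cfc (ptInd μ) A f ∈ Module.End.eigenspace (A : 𝓗 →ₗ[ℂ] 𝓗) ((μ : ℝ) : ℂ) := by
    intro μ hμ f
    rw [Module.End.mem_eigenspace_iff]
    have h1 : A * cfc (ptInd μ) A = cfc (fun t => t * ptInd μ t) A := by
      have := (cfc_mul (fun t : ℝ => t) (ptInd μ) A (continuousOn_id) (hcont μ hμ))
      rw [cfc_id' ℝ A hA] at this
      exact this.symm
    have h2 : (fun t : ℝ => t * ptInd μ t) = fun t => μ * ptInd μ t := by
      funext t
      by_cases h : t = μ <;> simp [ptInd, h]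
    have h3 : cfc (fun t => μ * ptInd μ t) A = μ • cfc (ptInd μ) A :=
      cfc_const_mul μ (ptInd μ) A (hcont μ hμ)
    have h4 : A * cfc (ptInd μ) A = μ • cfc (ptInd μ) A := by rw [h1, h2, h3]
    have := congrArg (fun (B : 𝓗 →L[ℂ] 𝓗) => B f) h4
    simp only [ContinuousLinearMap.mul_apply, ContinuousLinearMap.smul_apply] at this
    rw [ContinuousLinearMap.coe_coe]
    rw [this]
    norm_num [Complex.real_smul]
  set W : Submodule ℂ 𝓗 :=
    ⨆ i : {μ : ℝ // μ ∈ F}, Module.End.eigenspace (A : 𝓗 →ₗ[ℂ] 𝓗) (((i : ℝ) : ℝ) : ℂ) with hW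
  haveI : ∀ i : {μ : ℝ // μ ∈ F}, FiniteDimensional ℂ
      (Module.End.eigenspace (A : 𝓗 →ₗ[ℂ] 𝓗) (((i : ℝ) : ℝ) : ℂ)) := fun i => hfd i i.2
  have hWfd : FiniteDimensional ℂ W := by
    haveI : Finite {μ : ℝ // μ ∈ F} := F.finite_toSet.to_subtype
    exact Submodule.finiteDimensional_iSup _
  refine ⟨P, W, hWfd, ?_, ?_⟩
  · intro f
    have : P f = ∑ μ ∈ F.attach, cfc (ptInd (μ : ℝ)) A f := by
      rw [hP, ← Finset.sum_attach F (fun μ => cfc (ptInd μ) A)]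
      simp [ContinuousLinearMap.sum_apply]
    rw [this]
    exact Submodule.sum_mem _ fun i _ =>
      Submodule.mem_iSup_of_mem i (heig i i.2 f)
  · intro f hf
    -- r t = t + ∑ μ∈F, (η - t) * ptInd μ t
    set g : ℝ → ℝ := fun t => ∑ μ ∈ F, (η - t) * ptInd μ t with hg
    have hgcont : ContinuousOn g (spectrum ℝ A) := by
      apply continuousOn_finset_sum
      intro μ hμ
      exact ((continuousOn_const.sub continuousOn_id).mul (hcont μ hμ))
    set r : ℝ → ℝ := fun t => t + g t with hr
    have hrc : ContinuousOn r (spectrum ℝ A) := continuousOn_id.add hgcont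
    -- cfc r A = A + (η•1 - A) * P
    have hsplit : cfc r A = A + (algebraMap ℝ (𝓗 →L[ℂ] 𝓗) η - A) * P := by
      rw [hr]
      have h1 : cfc (fun t => t + g t) A = cfc (fun t : ℝ => t) A + cfc g A :=
        cfc_add A _ _ continuousOn_id hgcont
      rw [h1, cfc_id' ℝ A hA]
      congr 1
      have h2 : cfc g A = ∑ μ ∈ F, cfc (fun t => (η - t) * ptInd μ t) A := by
        rw [hg]
        have hfun : (fun t : ℝ => ∑ μ ∈ F, (η - t) * ptInd μ t)
            = ∑ μ ∈ F, fun t : ℝ => (η - t) * ptInd μ t := by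
          funext t; simp [Finset.sum_apply]
        rw [hfun]
        exact cfc_sum _ A F fun μ hμ => ((continuousOn_const.sub continuousOn_id).mul (hcont μ hμ))
      rw [h2, hP, Finset.mul_sum]
      apply Finset.sum_congr rfl
      intro μ hμ
      have : cfc (fun t => (η - t) * ptInd μ t) A
          = cfc (fun t : ℝ => η - t) A * cfc (ptInd μ) A :=
        cfc_mul _ _ A (continuousOn_const.sub continuousOn_id) (hcont μ hμ)
      rw [this]
      congr 1
      rw [cfc_sub (fun _ : ℝ => η) (fun t : ℝ => t) A continuousOn_const continuousOn_id,
        cfc_const η A hA, cfc_id' ℝ A hA]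
    -- nonnegativity of η - r on the spectrum
    have hnn : ∀ t ∈ spectrum ℝ A, 0 ≤ η - r t := by
      intro t ht
      by_cases htF : t ∈ F
      · have hgt : ∑ μ ∈ F, (η - t) * ptInd μ t = η - t := by
          rw [Finset.sum_eq_single t]
          · simp [ptInd]
          · intro b hb hbt
            simp only [ptInd, mul_ite, mul_one, mul_zero, ite_eq_right_iff]
            intro h; exact absurd h.symm hbt
          · intro h; exact absurd htF h
        have : g t = η - t := by rw [hg]; exact hgt
        simp [hr, this]
      · have hg0 : g t = 0 := by
          rw [hg]
          apply Finset.sum_eq_zero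
          intro μ hμ
          have : t ≠ μ := fun h => htF (h ▸ hμ)
          simp [ptInd, this]
        have := hsp t ht htF
        simp [hr, hg0]
        linarith
    have hDpos : (0 : 𝓗 →L[ℂ] 𝓗) ≤ cfc (fun t => η - r t) A := cfc_nonneg hnn
    have hDeq : cfc (fun t => η - r t) A = algebraMap ℝ (𝓗 →L[ℂ] 𝓗) η - cfc r A := by
      rw [cfc_sub (fun _ : ℝ => η) r A continuousOn_const hrc, cfc_const η A hA]
    -- apply to f
    have hrf : cfc r A f = A f := by
      rw [hsplit, ContinuousLinearMap.add_apply, ContinuousLinearMap.mul_apply, hf,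
        map_zero, add_zero]
    have halg : (algebraMap ℝ (𝓗 →L[ℂ] 𝓗) η) f = (η : ℂ) • f := by
      rw [Algebra.algebraMap_eq_smul_one, ContinuousLinearMap.smul_apply,
        ContinuousLinearMap.one_apply, RCLike.real_smul_eq_coe_smul (K := ℂ)]
      rfl
    have hpos := (ContinuousLinearMap.nonneg_iff_isPositive _).mp hDpos
    have hq := hpos.inner_nonneg_right f
    rw [hDeq] at hq
    simp only [ContinuousLinearMap.sub_apply, inner_sub_right, map_sub,
      RCLike.re_to_complex] at hq
    rw [halg, hrf] at hq
    have hnorm : (inner ℂ f f : ℂ).re = ‖f‖ ^ 2 := by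
      simpa [RCLike.re_to_complex] using inner_self_eq_norm_sq (𝕜 := ℂ) f
    have hinner : (inner ℂ f ((η : ℂ) • f) : ℂ).re = η * ‖f‖ ^ 2 := by
      rw [inner_smul_right, Complex.re_ofReal_mul, hnorm]
    have hq' := (Complex.nonneg_iff.mp hq).1
    rw [Complex.sub_re, hinner] at hq'
    linarith

end AuxSpec


section AuxSpec2
variable [CompleteSpace 𝓗]

lemma quad_bound (H : 𝓗 →L[ℂ] 𝓗) (hH : IsSelfAdjoint H) (Em : ℝ) (f : 𝓗)
    (hf : f ∈ eigBelow H Em) (hne : f ≠ 0) : (inner ℂ f (H f) : ℂ).re < Em * ‖f‖ ^ 2 := by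
  classical
  obtain ⟨c, hc, hsum⟩ := (Submodule.mem_iSup_iff_exists_finsupp _ f).mp hf
  have hsym : (H : 𝓗 →ₗ[ℂ] 𝓗).IsSymmetric :=
    ContinuousLinearMap.isSelfAdjoint_iff_isSymmetric.mp hH
  have hofam := hsym.orthogonalFamily_eigenspaces
  have horth : ∀ i j : {t : ℝ // t < Em}, i ≠ j → (inner ℂ (c i) (c j) : ℂ) = 0 := by
    intro i j hij
    have hne' : ((i : ℝ) : ℂ) ≠ ((j : ℝ) : ℂ) := by
      simp only [ne_eq, Complex.ofReal_inj]
      exact fun h => hij (Subtype.ext h)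
    exact hofam hne' (⟨c i, hc i⟩ : Module.End.eigenspace (H : 𝓗 →ₗ[ℂ] 𝓗) ((i : ℝ) : ℂ))
      (⟨c j, hc j⟩ : Module.End.eigenspace (H : 𝓗 →ₗ[ℂ] 𝓗) ((j : ℝ) : ℂ))
  have hHc : ∀ i : {t : ℝ // t < Em}, H (c i) = ((i : ℝ) : ℂ) • c i := by
    intro i
    have := Module.End.mem_eigenspace_iff.mp (hc i)
    simpa using this
  set s := c.support with hs
  have hf' : f = ∑ i ∈ s, c i := by
    rw [← hsum]; rfl
  have hinnerH : (inner ℂ f (H f) : ℂ) = ∑ i ∈ s, ((i : ℝ) : ℂ) * inner ℂ (c i) (c i) := by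
    rw [hf', map_sum, sum_inner]
    apply Finset.sum_congr rfl
    intro i hi
    rw [inner_sum, Finset.sum_eq_single i]
    · rw [hHc i, inner_smul_right]
    · intro j _ hji
      rw [hHc j, inner_smul_right, horth i j (Ne.symm hji), mul_zero]
    · intro h; exact absurd hi h
  have hinnerF : (inner ℂ f f : ℂ) = ∑ i ∈ s, inner ℂ (c i) (c i) := by
    rw [hf', sum_inner]
    apply Finset.sum_congr rfl
    intro i hi
    rw [inner_sum, Finset.sum_eq_single i]
    · intro j _ hij
      exact horth i j fun h => hij h.symm
    · intro h; exact absurd hi h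
  have hre : (inner ℂ f (H f) : ℂ).re = ∑ i ∈ s, (i : ℝ) * ‖c i‖ ^ 2 := by
    rw [hinnerH, Complex.re_sum]
    apply Finset.sum_congr rfl
    intro i _
    rw [Complex.re_ofReal_mul]
    congr 1
    simpa [RCLike.re_to_complex] using inner_self_eq_norm_sq (𝕜 := ℂ) (c i)
  have hnf : ‖f‖ ^ 2 = ∑ i ∈ s, ‖c i‖ ^ 2 := by
    have h1 : (inner ℂ f f : ℂ).re = ‖f‖ ^ 2 := by
      simpa [RCLike.re_to_complex] using inner_self_eq_norm_sq (𝕜 := ℂ) f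
    rw [← h1, hinnerF, Complex.re_sum]
    apply Finset.sum_congr rfl
    intro i _
    simpa [RCLike.re_to_complex] using inner_self_eq_norm_sq (𝕜 := ℂ) (c i)
  have hsne : s.Nonempty := by
    rcases Finset.eq_empty_or_nonempty s with h | h
    · exfalso; apply hne; rw [hf', h, Finset.sum_empty]
    · exact h
  rw [hre, hnf, Finset.mul_sum]
  apply Finset.sum_lt_sum_of_nonempty hsne
  intro i hi
  have h1 : c i ≠ 0 := Finsupp.mem_support_iff.mp hi
  have h2 : 0 < ‖c i‖ ^ 2 := pow_pos (norm_pos_iff.mpr h1) 2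
  exact mul_lt_mul_of_pos_right i.2 h2

end AuxSpec2

section Sym

variable {α β : Type*} [MeasurableSpace α] [MeasurableSpace β]
  [TopologicalSpace α] [OpensMeasurableSpace α] [SecondCountableTopology α]

lemma kernel_op_symm
    (ν₁ : Measure α) (ν₂ : Measure β) [IsFiniteMeasure ν₁] [IsFiniteMeasure ν₂]
    (k : α → α → ℂ) (hkc : Continuous fun p : α × α => k p.1 p.2)
    (hkb : ∃ C, ∀ x s, ‖k x s‖ ≤ C)
    (hkh : ∀ x s, k x s = starRingEnd ℂ (k s x))
    (T : Lp ℂ 2 (ν₁.prod ν₂) →L[ℂ] Lp ℂ 2 (ν₁.prod ν₂))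
    (hT : ∀ f : Lp ℂ 2 (ν₁.prod ν₂),
      (T f : α × β → ℂ) =ᵐ[ν₁.prod ν₂] fun p => ∫ s, k p.1 s * f (s, p.2) ∂ν₁) :
    IsSelfAdjoint T := by
  rw [ContinuousLinearMap.isSelfAdjoint_iff_isSymmetric]
  intro f g
  simp only [ContinuousLinearMap.coe_coe]
  obtain ⟨C, hkbd⟩ := hkb
  -- the rearranging measurable equiv
  let e : ((α × β) × α) ≃ᵐ ((α × β) × α) :=
    (MeasurableEquiv.prodAssoc.trans
      ((MeasurableEquiv.refl α).prodCongr MeasurableEquiv.prodComm)).trans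
      MeasurableEquiv.prodComm
  have he : ∀ q : (α × β) × α, e q = ((q.2, q.1.2), q.1.1) := fun q => rfl
  have hpe : MeasurePreserving e ((ν₁.prod ν₂).prod ν₁) ((ν₁.prod ν₂).prod ν₁) := by
    have h1 : MeasurePreserving MeasurableEquiv.prodAssoc ((ν₁.prod ν₂).prod ν₁)
        (ν₁.prod (ν₂.prod ν₁)) :=
      ⟨MeasurableEquiv.prodAssoc.measurable, Measure.prodAssoc_prod⟩
    have h2 : MeasurePreserving (Prod.map (id : α → α) Prod.swap)
        (ν₁.prod (ν₂.prod ν₁)) (ν₁.prod (ν₁.prod ν₂)) :=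
      (MeasurePreserving.id ν₁).prod Measure.measurePreserving_swap
    have h3 : MeasurePreserving Prod.swap (ν₁.prod (ν₁.prod ν₂)) ((ν₁.prod ν₂).prod ν₁) :=
      Measure.measurePreserving_swap
    exact h3.comp (h2.comp h1)
  -- membership facts
  have hF1 : ∀ h : Lp ℂ 2 (ν₁.prod ν₂),
      MemLp (fun q : (α × β) × α => (h : α × β → ℂ) q.1) 2 ((ν₁.prod ν₂).prod ν₁) := by
    intro h
    have h0 : MemLp (h : α × β → ℂ) 2 (Measure.map Prod.fst ((ν₁.prod ν₂).prod ν₁)) := by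
      rw [Measure.map_fst_prod]
      exact (Lp.memLp h).smul_measure (measure_ne_top ν₁ _)
    exact h0.comp_of_map measurable_fst.aemeasurable
  have hF2 : MemLp (fun q : (α × β) × α => (f : α × β → ℂ) (q.2, q.1.2)) 2
      ((ν₁.prod ν₂).prod ν₁) := by
    have h0 : MemLp (fun q : (α × β) × α => (f : α × β → ℂ) q.1) 2
        (Measure.map e ((ν₁.prod ν₂).prod ν₁)) := by
      rw [hpe.map_eq]; exact hF1 f
    exact h0.comp_of_map e.measurable.aemeasurable
  have hF2c : MemLp (fun q : (α × β) × α =>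
      (starRingEnd ℂ) ((f : α × β → ℂ) (q.2, q.1.2))) 2 ((ν₁.prod ν₂).prod ν₁) := by
    refine MemLp.of_le hF2 ?_ ?_
    · exact (RCLike.continuous_conj).comp_aestronglyMeasurable hF2.aestronglyMeasurable
    · filter_upwards with q
      simp
  have hmul : MemLp (fun q : (α × β) × α =>
      (starRingEnd ℂ) ((f : α × β → ℂ) (q.2, q.1.2)) * (g : α × β → ℂ) q.1) 1
      ((ν₁.prod ν₂).prod ν₁) :=
    MemLp.smul (φ := fun q : (α × β) × α =>
        (starRingEnd ℂ) ((f : α × β → ℂ) (q.2, q.1.2)))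
      (f := fun q : (α × β) × α => (g : α × β → ℂ) q.1)
      (p := 2) (q := 2) (r := 1) (hF1 g) hF2c
  set Φ : ((α × β) × α) → ℂ := fun q =>
    k q.2 q.1.1 * ((starRingEnd ℂ) ((f : α × β → ℂ) (q.2, q.1.2)) * (g : α × β → ℂ) q.1) with hΦ
  have hΦint : Integrable Φ ((ν₁.prod ν₂).prod ν₁) := by
    have hkm : AEStronglyMeasurable (fun q : (α × β) × α => k q.2 q.1.1)
        ((ν₁.prod ν₂).prod ν₁) := by
      have hsm : StronglyMeasurable (fun p : α × α => k p.1 p.2) := hkc.stronglyMeasurable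
      exact (hsm.comp_measurable
        (measurable_snd.prodMk (measurable_fst.comp measurable_fst))).aestronglyMeasurable
    exact (memLp_one_iff_integrable.mp hmul).bdd_mul hkm (ae_of_all _ fun q => hkbd _ _)
  have hΦeint : Integrable (fun q => Φ (e q)) ((ν₁.prod ν₂).prod ν₁) :=
    (hpe.integrable_comp_emb e.measurableEmbedding).mpr hΦint
  -- left side
  have hleft : (inner ℂ (T f) g : ℂ) = ∫ q, Φ q ∂((ν₁.prod ν₂).prod ν₁) := by
    rw [L2.inner_def]
    have h1 : ∀ᵐ p ∂(ν₁.prod ν₂), (inner ℂ ((T f : α × β → ℂ) p) ((g : α × β → ℂ) p) : ℂ)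
        = ∫ s, Φ (p, s) ∂ν₁ := by
      filter_upwards [hT f] with p hp
      rw [RCLike.inner_apply', hp]
      rw [← integral_conj, ← integral_mul_const]
      apply integral_congr_ae
      filter_upwards with s
      rw [hΦ]
      simp only [map_mul]
      rw [← hkh s p.1]
      ring
    rw [integral_congr_ae h1]
    exact (integral_prod Φ hΦint).symm
  -- right side
  have hright : (inner ℂ f (T g) : ℂ) = ∫ q, Φ (e q) ∂((ν₁.prod ν₂).prod ν₁) := by
    rw [L2.inner_def]
    have h1 : ∀ᵐ p ∂(ν₁.prod ν₂), (inner ℂ ((f : α × β → ℂ) p) ((T g : α × β → ℂ) p) : ℂ)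
        = ∫ s, Φ (e (p, s)) ∂ν₁ := by
      filter_upwards [hT g] with p hp
      rw [RCLike.inner_apply', hp]
      rw [← integral_const_mul]
      apply integral_congr_ae
      filter_upwards with s
      rw [hΦ, he]
      simp only [map_mul]
      ring
    rw [integral_congr_ae h1]
    exact (integral_prod _ hΦeint).symm
  rw [hleft, hright]
  exact (hpe.integral_comp' Φ).symm

end Sym

section Sym2

variable {α β : Type*} [MeasurableSpace α] [MeasurableSpace β]
  [TopologicalSpace β] [OpensMeasurableSpace β] [SecondCountableTopology β]

lemma kernel_op_symm₂
    (ν₁ : Measure α) (ν₂ : Measure β) [IsFiniteMeasure ν₁] [IsFiniteMeasure ν₂]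
    (k : β → β → ℂ) (hkc : Continuous fun p : β × β => k p.1 p.2)
    (hkb : ∃ C, ∀ x s, ‖k x s‖ ≤ C)
    (hkh : ∀ x s, k x s = starRingEnd ℂ (k s x))
    (T : Lp ℂ 2 (ν₁.prod ν₂) →L[ℂ] Lp ℂ 2 (ν₁.prod ν₂))
    (hT : ∀ f : Lp ℂ 2 (ν₁.prod ν₂),
      (T f : α × β → ℂ) =ᵐ[ν₁.prod ν₂] fun p => ∫ t, k p.2 t * f (p.1, t) ∂ν₂) :
    IsSelfAdjoint T := by
  rw [ContinuousLinearMap.isSelfAdjoint_iff_isSymmetric]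
  intro f g
  simp only [ContinuousLinearMap.coe_coe]
  obtain ⟨C, hkbd⟩ := hkb
  have h1 : MeasurePreserving MeasurableEquiv.prodAssoc ((ν₁.prod ν₂).prod ν₂)
      (ν₁.prod (ν₂.prod ν₂)) :=
    ⟨MeasurableEquiv.prodAssoc.measurable, Measure.prodAssoc_prod⟩
  let e : ((α × β) × β) ≃ᵐ ((α × β) × β) :=
    (MeasurableEquiv.prodAssoc.trans
      ((MeasurableEquiv.refl α).prodCongr MeasurableEquiv.prodComm)).trans
      MeasurableEquiv.prodAssoc.symm
  have he : ∀ q : (α × β) × β, e q = ((q.1.1, q.2), q.1.2) := fun q => rfl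
  have hpe : MeasurePreserving e ((ν₁.prod ν₂).prod ν₂) ((ν₁.prod ν₂).prod ν₂) := by
    have h2 : MeasurePreserving (Prod.map (id : α → α) Prod.swap)
        (ν₁.prod (ν₂.prod ν₂)) (ν₁.prod (ν₂.prod ν₂)) :=
      (MeasurePreserving.id ν₁).prod Measure.measurePreserving_swap
    have h3 : MeasurePreserving MeasurableEquiv.prodAssoc.symm (ν₁.prod (ν₂.prod ν₂))
        ((ν₁.prod ν₂).prod ν₂) := h1.symm _
    exact h3.comp (h2.comp h1)
  have hF1 : ∀ h : Lp ℂ 2 (ν₁.prod ν₂),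
      MemLp (fun q : (α × β) × β => (h : α × β → ℂ) q.1) 2 ((ν₁.prod ν₂).prod ν₂) := by
    intro h
    have h0 : MemLp (h : α × β → ℂ) 2 (Measure.map Prod.fst ((ν₁.prod ν₂).prod ν₂)) := by
      rw [Measure.map_fst_prod]
      exact (Lp.memLp h).smul_measure (measure_ne_top ν₂ _)
    exact h0.comp_of_map measurable_fst.aemeasurable
  have hF2 : MemLp (fun q : (α × β) × β => (f : α × β → ℂ) (q.1.1, q.2)) 2
      ((ν₁.prod ν₂).prod ν₂) := by
    have h0 : MemLp (fun q : (α × β) × β => (f : α × β → ℂ) q.1) 2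
        (Measure.map e ((ν₁.prod ν₂).prod ν₂)) := by
      rw [hpe.map_eq]; exact hF1 f
    exact h0.comp_of_map e.measurable.aemeasurable
  have hF2c : MemLp (fun q : (α × β) × β =>
      (starRingEnd ℂ) ((f : α × β → ℂ) (q.1.1, q.2))) 2 ((ν₁.prod ν₂).prod ν₂) := by
    refine MemLp.of_le hF2 ?_ ?_
    · exact (RCLike.continuous_conj).comp_aestronglyMeasurable hF2.aestronglyMeasurable
    · filter_upwards with q
      simp
  have hmul : MemLp (fun q : (α × β) × β =>
      (starRingEnd ℂ) ((f : α × β → ℂ) (q.1.1, q.2)) * (g : α × β → ℂ) q.1) 1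
      ((ν₁.prod ν₂).prod ν₂) :=
    MemLp.smul (φ := fun q : (α × β) × β =>
        (starRingEnd ℂ) ((f : α × β → ℂ) (q.1.1, q.2)))
      (f := fun q : (α × β) × β => (g : α × β → ℂ) q.1)
      (p := 2) (q := 2) (r := 1) (hF1 g) hF2c
  set Φ : ((α × β) × β) → ℂ := fun q =>
    k q.2 q.1.2 * ((starRingEnd ℂ) ((f : α × β → ℂ) (q.1.1, q.2)) * (g : α × β → ℂ) q.1) with hΦ
  have hΦint : Integrable Φ ((ν₁.prod ν₂).prod ν₂) := by
    have hkm : AEStronglyMeasurable (fun q : (α × β) × β => k q.2 q.1.2)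
        ((ν₁.prod ν₂).prod ν₂) := by
      have hsm : StronglyMeasurable (fun p : β × β => k p.1 p.2) := hkc.stronglyMeasurable
      exact (hsm.comp_measurable
        (measurable_snd.prodMk (measurable_snd.comp measurable_fst))).aestronglyMeasurable
    exact (memLp_one_iff_integrable.mp hmul).bdd_mul hkm (ae_of_all _ fun q => hkbd _ _)
  have hΦeint : Integrable (fun q => Φ (e q)) ((ν₁.prod ν₂).prod ν₂) :=
    (hpe.integrable_comp_emb e.measurableEmbedding).mpr hΦint
  have hleft : (inner ℂ (T f) g : ℂ) = ∫ q, Φ q ∂((ν₁.prod ν₂).prod ν₂) := by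
    rw [L2.inner_def]
    have h1 : ∀ᵐ p ∂(ν₁.prod ν₂), (inner ℂ ((T f : α × β → ℂ) p) ((g : α × β → ℂ) p) : ℂ)
        = ∫ t, Φ (p, t) ∂ν₂ := by
      filter_upwards [hT f] with p hp
      rw [RCLike.inner_apply', hp]
      rw [← integral_conj, ← integral_mul_const]
      apply integral_congr_ae
      filter_upwards with t
      rw [hΦ]
      simp only [map_mul]
      rw [← hkh t p.2]
      ring
    rw [integral_congr_ae h1]
    exact (integral_prod Φ hΦint).symm
  have hright : (inner ℂ f (T g) : ℂ) = ∫ q, Φ (e q) ∂((ν₁.prod ν₂).prod ν₂) := by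
    rw [L2.inner_def]
    have h1 : ∀ᵐ p ∂(ν₁.prod ν₂), (inner ℂ ((f : α × β → ℂ) p) ((T g : α × β → ℂ) p) : ℂ)
        = ∫ t, Φ (e (p, t)) ∂ν₂ := by
      filter_upwards [hT g] with p hp
      rw [RCLike.inner_apply', hp]
      rw [← integral_const_mul]
      apply integral_congr_ae
      filter_upwards with t
      rw [hΦ, he]
      simp only [map_mul]
      ring
    rw [integral_congr_ae h1]
    exact (integral_prod _ hΦeint).symm
  rw [hleft, hright]
  exact (hpe.integral_comp' Φ).symm

end Sym2


section MulOp

lemma mul_op_symm {γ : Type*} [MeasurableSpace γ] (μ : Measure γ) (k₀ : γ → ℝ)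
    (H₀ : Lp ℂ 2 μ →L[ℂ] Lp ℂ 2 μ)
    (hH₀ : ∀ f : Lp ℂ 2 μ, (H₀ f : γ → ℂ) =ᵐ[μ] fun p => (k₀ p : ℂ) * f p) :
    IsSelfAdjoint H₀ := by
  rw [ContinuousLinearMap.isSelfAdjoint_iff_isSymmetric]
  intro f g
  simp only [ContinuousLinearMap.coe_coe]
  rw [L2.inner_def, L2.inner_def]
  apply integral_congr_ae
  filter_upwards [hH₀ f, hH₀ g] with p hpf hpg
  rw [RCLike.inner_apply, RCLike.inner_apply, hpf, hpg]
  simp only [map_mul, Complex.conj_ofReal]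
  ring

end MulOp

section Setting

variable {d₁ d₂ : ℕ}
  {Ω₁ : Set (EuclideanSpace ℝ (Fin d₁))} {Ω₂ : Set (EuclideanSpace ℝ (Fin d₂))}

set_option maxHeartbeats 1000000 in
/-- **Theorem 4.1.** Suppose `k₀ ≥ 0` vanishes somewhere, `K₁ ≥ 0`, `K₂ ≥ 0`, and
`H₀ ≥ (E_min(H) + η₀)·I` where `η₀ = sup σ_e(T)`, `T = T₁ + T₂`, `H = H₀ - T`.
If `σ_d(T)` is finite, then the set of eigenvalues of `H` lying strictly below `E_min(H)`
is finite and their total multiplicity is finite. -/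
theorem finitely_many_eigenvalues_below
    (ν₁ : Measure Ω₁) (ν₂ : Measure Ω₂) [IsFiniteMeasure ν₁] [IsFiniteMeasure ν₂]
    (k₁ : Ω₁ → Ω₁ → ℂ) (k₂ : Ω₂ → Ω₂ → ℂ)
    (K₁ : Lp ℂ 2 ν₁ →L[ℂ] Lp ℂ 2 ν₁) (K₂ : Lp ℂ 2 ν₂ →L[ℂ] Lp ℂ 2 ν₂)
    (T₁ T₂ : Lp ℂ 2 (ν₁.prod ν₂) →L[ℂ] Lp ℂ 2 (ν₁.prod ν₂))
    (hΩ₁ : IsCompact Ω₁) (hΩ₂ : IsCompact Ω₂)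
    (hk₁c : Continuous fun p : Ω₁ × Ω₁ => k₁ p.1 p.2)
    (hk₂c : Continuous fun p : Ω₂ × Ω₂ => k₂ p.1 p.2)
    (hk₁h : ∀ x s, k₁ x s = starRingEnd ℂ (k₁ s x))
    (hk₂h : ∀ y t, k₂ y t = starRingEnd ℂ (k₂ t y))
    (hK₁ : ∀ φ : Lp ℂ 2 ν₁, (K₁ φ : Ω₁ → ℂ) =ᵐ[ν₁] fun x => ∫ s, k₁ x s * φ s ∂ν₁)
    (hK₂ : ∀ φ : Lp ℂ 2 ν₂, (K₂ φ : Ω₂ → ℂ) =ᵐ[ν₂] fun y => ∫ t, k₂ y t * φ t ∂ν₂)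
    (hK₁sa : IsSelfAdjoint K₁) (hK₂sa : IsSelfAdjoint K₂)
    (hK₁cpt : IsCompactOperator K₁) (hK₂cpt : IsCompactOperator K₂)
    (hT₁ : ∀ f : Lp ℂ 2 (ν₁.prod ν₂),
      (T₁ f : Ω₁ × Ω₂ → ℂ) =ᵐ[ν₁.prod ν₂] fun p => ∫ s, k₁ p.1 s * f (s, p.2) ∂ν₁)
    (hT₂ : ∀ f : Lp ℂ 2 (ν₁.prod ν₂),
      (T₂ f : Ω₁ × Ω₂ → ℂ) =ᵐ[ν₁.prod ν₂] fun p => ∫ t, k₂ p.2 t * f (p.1, t) ∂ν₂)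
    (hinf₁ : ¬ FiniteDimensional ℂ (Lp ℂ 2 ν₁))
    (hinf₂ : ¬ FiniteDimensional ℂ (Lp ℂ 2 ν₂))
    (k₀ : Ω₁ × Ω₂ → ℝ)
    (hk₀c : Continuous k₀) (hk₀nn : ∀ p, 0 ≤ k₀ p) (hk₀z : ∃ p, k₀ p = 0)
    (H₀ : Lp ℂ 2 (ν₁.prod ν₂) →L[ℂ] Lp ℂ 2 (ν₁.prod ν₂))
    (hH₀ : ∀ f : Lp ℂ 2 (ν₁.prod ν₂),
      (H₀ f : Ω₁ × Ω₂ → ℂ) =ᵐ[ν₁.prod ν₂] fun p => (k₀ p : ℂ) * f p)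
    (hK₁pos : K₁.IsPositive) (hK₂pos : K₂.IsPositive)
    (hH₀ge : ∀ f : Lp ℂ 2 (ν₁.prod ν₂),
      (Emin (H₀ - (T₁ + T₂)) + sSup {x : ℝ | (x : ℂ) ∈ essSpectrum (T₁ + T₂)}) * ‖f‖ ^ 2 ≤
        (inner ℂ f (H₀ f) : ℂ).re)
    (hTdfin : (discreteSpectrum (T₁ + T₂)).Finite) :
    {lam : ℝ | lam < Emin (H₀ - (T₁ + T₂)) ∧
        Module.End.HasEigenvalue ((H₀ - (T₁ + T₂) : Lp ℂ 2 (ν₁.prod ν₂) →L[ℂ]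
          Lp ℂ 2 (ν₁.prod ν₂)) : Lp ℂ 2 (ν₁.prod ν₂) →ₗ[ℂ] Lp ℂ 2 (ν₁.prod ν₂))
          ((lam : ℝ) : ℂ)}.Finite ∧
    FiniteDimensional ℂ (eigBelow (H₀ - (T₁ + T₂)) (Emin (H₀ - (T₁ + T₂)))) := by
    classical
  haveI : CompactSpace Ω₁ := isCompact_iff_compactSpace.mp hΩ₁
  haveI : CompactSpace Ω₂ := isCompact_iff_compactSpace.mp hΩ₂
  have hkb₁ : ∃ C, ∀ x s, ‖k₁ x s‖ ≤ C := by
    obtain ⟨C, hC⟩ := (isCompact_range hk₁c.norm).bddAbove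
    exact ⟨C, fun x s => hC ⟨(x, s), rfl⟩⟩
  have hkb₂ : ∃ C, ∀ x s, ‖k₂ x s‖ ≤ C := by
    obtain ⟨C, hC⟩ := (isCompact_range hk₂c.norm).bddAbove
    exact ⟨C, fun x s => hC ⟨(x, s), rfl⟩⟩
  have hT₁sa : IsSelfAdjoint T₁ := kernel_op_symm ν₁ ν₂ k₁ hk₁c hkb₁ hk₁h T₁ hT₁
  have hT₂sa : IsSelfAdjoint T₂ := kernel_op_symm₂ ν₁ ν₂ k₂ hk₂c hkb₂ hk₂h T₂ hT₂
  have hH₀sa : IsSelfAdjoint H₀ := mul_op_symm _ k₀ H₀ hH₀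
  set T : Lp ℂ 2 (ν₁.prod ν₂) →L[ℂ] Lp ℂ 2 (ν₁.prod ν₂) := T₁ + T₂ with hTdef
  have hTsa : IsSelfAdjoint T := hT₁sa.add hT₂sa
  set H : Lp ℂ 2 (ν₁.prod ν₂) →L[ℂ] Lp ℂ 2 (ν₁.prod ν₂) := H₀ - T with hHdef
  have hHsa : IsSelfAdjoint H := hH₀sa.sub hTsa
  set Em : ℝ := Emin H with hEm
  set η₀ : ℝ := sSup {x : ℝ | (x : ℂ) ∈ essSpectrum T} with hη
  have hbdd : BddAbove {x : ℝ | (x : ℂ) ∈ essSpectrum T} := by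
    refine ⟨‖T‖ * ‖(1 : Lp ℂ 2 (ν₁.prod ν₂) →L[ℂ] Lp ℂ 2 (ν₁.prod ν₂))‖, fun x hx => ?_⟩
    have hx' : (x : ℂ) ∈ spectrum ℂ T := hx.1
    calc x ≤ |x| := le_abs_self x
    _ = ‖(x : ℂ)‖ := by rw [Complex.norm_real, Real.norm_eq_abs]
    _ ≤ ‖T‖ * ‖(1 : Lp ℂ 2 (ν₁.prod ν₂) →L[ℂ] Lp ℂ 2 (ν₁.prod ν₂))‖ :=
      spectrum.norm_le_norm_mul_of_mem hx'
  set Fs : Set ℝ := {x | x ∈ spectrum ℝ T ∧ η₀ < x} with hFs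
  have hFsd : ∀ x ∈ Fs, (x : ℂ) ∈ discreteSpectrum T := by
    rintro x ⟨hx, hgt⟩
    have hxC : (x : ℂ) ∈ spectrum ℂ T := by
      have := (spectrum.algebraMap_mem_iff ℂ (a := T) (r := x)).mpr hx
      simpa using this
    by_contra hnot
    have hmem : x ∈ {y : ℝ | (y : ℂ) ∈ essSpectrum T} := ⟨hxC, hnot⟩
    exact absurd (le_csSup hbdd hmem) (not_le.mpr hgt)
  have hFsfin : Fs.Finite := by
    apply Set.Finite.subset (Set.Finite.preimage (f := fun x : ℝ => (x : ℂ))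
      (Complex.ofReal_injective.injOn) hTdfin)
    exact hFsd
  obtain ⟨P, W, hWfd, hPW, hPbound⟩ := key_projection T hTsa η₀ hFsfin.toFinset
    (by
      intro μ hμ
      have hμFs : μ ∈ Fs := hFsfin.mem_toFinset.mp hμ
      obtain ⟨-, ε, hε, hball⟩ := (hFsd μ hμFs).1
      refine ⟨ε, hε, fun t ht => ?_⟩
      have htC : (t : ℂ) ∈ spectrum ℂ T := by
        have := (spectrum.algebraMap_mem_iff ℂ (a := T) (r := t)).mpr ht.1
        simpa using this
      have htb : (t : ℂ) ∈ Metric.ball (μ : ℂ) ε := by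
        rw [Metric.mem_ball, Complex.isometry_ofReal.dist_eq]
        exact ht.2
      have hmem : (t : ℂ) ∈ ({(μ : ℂ)} : Set ℂ) := by rw [← hball]; exact ⟨htC, htb⟩
      have : (t : ℂ) = (μ : ℂ) := by simpa using hmem
      simpa using Complex.ofReal_injective this)
    (fun μ hμ => ((hFsd μ (hFsfin.mem_toFinset.mp hμ)).2.2))
    (by
      intro x hx hxF
      by_contra hlt
      exact hxF (hFsfin.mem_toFinset.mpr ⟨hx, not_le.mp hlt⟩))
  have hV : FiniteDimensional ℂ (eigBelow H Em) := by
    set L : eigBelow H Em →ₗ[ℂ] W :=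
      LinearMap.codRestrict W
        ((P : Lp ℂ 2 (ν₁.prod ν₂) →ₗ[ℂ] Lp ℂ 2 (ν₁.prod ν₂)).comp
          (Submodule.subtype _)) (fun v => hPW v) with hL
    have hker : ∀ v : eigBelow H Em, L v = 0 → v = 0 := by
      intro v hv0
      have hPv : P (v : Lp ℂ 2 (ν₁.prod ν₂)) = 0 := by
        have := congrArg (Subtype.val) hv0
        exact this
      by_contra hne
      have hvne : (v : Lp ℂ 2 (ν₁.prod ν₂)) ≠ 0 := fun h => hne (Subtype.ext h)
      have hq1 := hPbound _ hPv
      have hq2 := quad_bound H hHsa Em _ v.2 hvne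
      have hq3 := hH₀ge (v : Lp ℂ 2 (ν₁.prod ν₂))
      have hH₀v : H₀ (v : Lp ℂ 2 (ν₁.prod ν₂)) = H (v : Lp ℂ 2 (ν₁.prod ν₂))
          + T (v : Lp ℂ 2 (ν₁.prod ν₂)) := by
        simp only [hHdef, ContinuousLinearMap.sub_apply, sub_add_cancel]
      have hsum : (inner ℂ (v : Lp ℂ 2 (ν₁.prod ν₂)) (H₀ (v : Lp ℂ 2 (ν₁.prod ν₂))) : ℂ).re
          = (inner ℂ (v : Lp ℂ 2 (ν₁.prod ν₂)) (H (v : Lp ℂ 2 (ν₁.prod ν₂))) : ℂ).re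
          + (inner ℂ (v : Lp ℂ 2 (ν₁.prod ν₂)) (T (v : Lp ℂ 2 (ν₁.prod ν₂))) : ℂ).re := by
        rw [hH₀v, inner_add_right]
        simp
      rw [hsum] at hq3
      have hring : (Em + η₀) * ‖(v : Lp ℂ 2 (ν₁.prod ν₂))‖ ^ 2
          = Em * ‖(v : Lp ℂ 2 (ν₁.prod ν₂))‖ ^ 2 + η₀ * ‖(v : Lp ℂ 2 (ν₁.prod ν₂))‖ ^ 2 := by
        ring
      linarith
    exact FiniteDimensional.of_injective L ((injective_iff_map_eq_zero L).mpr hker)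
  refine ⟨?_, hV⟩
  by_contra hinf
  have hSinf : {lam : ℝ | lam < Em ∧
      Module.End.HasEigenvalue
        ((H : Lp ℂ 2 (ν₁.prod ν₂) →L[ℂ] Lp ℂ 2 (ν₁.prod ν₂)) :
          Lp ℂ 2 (ν₁.prod ν₂) →ₗ[ℂ] Lp ℂ 2 (ν₁.prod ν₂)) ((lam : ℝ) : ℂ)}.Infinite := hinf
  haveI : Infinite {lam : ℝ // lam < Em ∧
      Module.End.HasEigenvalue
        ((H : Lp ℂ 2 (ν₁.prod ν₂) →L[ℂ] Lp ℂ 2 (ν₁.prod ν₂)) :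
          Lp ℂ 2 (ν₁.prod ν₂) →ₗ[ℂ] Lp ℂ 2 (ν₁.prod ν₂)) ((lam : ℝ) : ℂ)} :=
    hSinf.to_subtype
  have hex : ∀ s : {lam : ℝ // lam < Em ∧
      Module.End.HasEigenvalue
        ((H : Lp ℂ 2 (ν₁.prod ν₂) →L[ℂ] Lp ℂ 2 (ν₁.prod ν₂)) :
          Lp ℂ 2 (ν₁.prod ν₂) →ₗ[ℂ] Lp ℂ 2 (ν₁.prod ν₂)) ((lam : ℝ) : ℂ)},
      ∃ x, x ∈ Module.End.eigenspace
        ((H : Lp ℂ 2 (ν₁.prod ν₂) →L[ℂ] Lp ℂ 2 (ν₁.prod ν₂)) :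
          Lp ℂ 2 (ν₁.prod ν₂) →ₗ[ℂ] Lp ℂ 2 (ν₁.prod ν₂)) (((s : ℝ) : ℝ) : ℂ) ∧ x ≠ 0 :=
    fun s => (Submodule.ne_bot_iff _).mp (Module.End.hasEigenvalue_iff.mp s.2.2)
  choose v hv1 hv2 using hex
  have hli : LinearIndependent ℂ v :=
    Module.End.eigenvectors_linearIndependent'
      ((H : Lp ℂ 2 (ν₁.prod ν₂) →L[ℂ] Lp ℂ 2 (ν₁.prod ν₂)) :
        Lp ℂ 2 (ν₁.prod ν₂) →ₗ[ℂ] Lp ℂ 2 (ν₁.prod ν₂))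
      (fun s : {lam : ℝ // lam < Em ∧
        Module.End.HasEigenvalue
          ((H : Lp ℂ 2 (ν₁.prod ν₂) →L[ℂ] Lp ℂ 2 (ν₁.prod ν₂)) :
            Lp ℂ 2 (ν₁.prod ν₂) →ₗ[ℂ] Lp ℂ 2 (ν₁.prod ν₂)) ((lam : ℝ) : ℂ)} =>
        (((s : ℝ) : ℝ) : ℂ))
      (fun a b hab => Subtype.ext (Complex.ofReal_injective hab)) v
      (fun s => ⟨hv1 s, hv2 s⟩)
  have hvV : ∀ s, v s ∈ eigBelow H Em := fun s =>
    (le_iSup (fun t : {t : ℝ // t < Em} => Module.End.eigenspace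
      ((H : Lp ℂ 2 (ν₁.prod ν₂) →L[ℂ] Lp ℂ 2 (ν₁.prod ν₂)) :
        Lp ℂ 2 (ν₁.prod ν₂) →ₗ[ℂ] Lp ℂ 2 (ν₁.prod ν₂)) (((t : ℝ) : ℝ) : ℂ))
      ⟨(s : ℝ), s.2.1⟩) (hv1 s)
  have hliu : LinearIndependent ℂ (fun s => (⟨v s, hvV s⟩ : eigBelow H Em)) := by
    apply LinearIndependent.of_comp (eigBelow H Em).subtype
    convert hli
    all_goals rfl
  haveI : FiniteDimensional ℂ (eigBelow H Em) := hV
  exact Module.Finite.not_linearIndependent_of_infinite _ hliu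

end Setting

end
end

section
/- Let W₁ = H₀ − T₁ on L²(Ω₁×Ω₂, ν₁⊗ν₂). For every λ ∈ ℝ, every f ∈ L²(Ω₁×Ω₂) with W₁ f = λ f, and every essentially bounded measurable function ψ : Ω₂ → ℂ, the function g(x,y) = ψ(y) f(x,y) satisfies W₁ g = λ g. Consequently, if the measure ν₂ is nonatomic, then every eigenvalue of W₁ has an infinite-dimensional eigenspace, and hence the discrete spectrum of W₁ is empty: σ_d(W₁) = ∅. -/
open MeasureTheory Filter Topology Metric

noncomputable section

variable {𝓗 : Type*} [NormedAddCommGroup 𝓗] [InnerProductSpace ℂ 𝓗]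

open scoped ENNReal NNReal

section SplitX

variable {α : Type*} [MetricSpace α] [SecondCountableTopology α] [MeasurableSpace α]
  [OpensMeasurableSpace α] (μ : Measure α) [NullSingletonClass μ]

lemma my_split {s : Set α} (hs : MeasurableSet s) (h : μ s ≠ 0) :
    ∃ u, MeasurableSet u ∧ u ⊆ s ∧ μ u ≠ 0 ∧ μ (s \ u) ≠ 0 := by
  classical
  set T : Set α := {x | ∃ r, 0 < r ∧ μ (s ∩ Metric.ball x r) = 0} with hT
  have hTnull : μ (s ∩ T) = 0 := by
    set F : α → Set α := fun x =>
      if h : ∃ r, 0 < r ∧ μ (s ∩ Metric.ball x r) = 0 then Metric.ball x h.choose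
      else Set.univ with hF
    have hmem : ∀ x ∈ s ∩ T, F x ∈ 𝓝[s ∩ T] x := by
      intro x hx
      apply mem_nhdsWithin_of_mem_nhds
      have hx2 : ∃ r, 0 < r ∧ μ (s ∩ Metric.ball x r) = 0 := hx.2
      rw [hF]; simp only [dif_pos hx2]
      exact Metric.ball_mem_nhds _ hx2.choose_spec.1
    obtain ⟨t, hts, htc, htU⟩ := TopologicalSpace.countable_cover_nhdsWithin hmem
    have hsub : s ∩ T ⊆ ⋃ x ∈ t, s ∩ F x := by
      intro y hy
      obtain ⟨x, hxt, hyx⟩ := Set.mem_iUnion₂.1 (htU hy)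
      exact Set.mem_iUnion₂.2 ⟨x, hxt, hy.1, hyx⟩
    refine measure_mono_null hsub ((measure_biUnion_null_iff htc).2 ?_)
    intro x hxt
    have hx2 : ∃ r, 0 < r ∧ μ (s ∩ Metric.ball x r) = 0 := (hts hxt).2
    rw [hF]; simp only [dif_pos hx2]
    exact hx2.choose_spec.2
  have h2 : μ (s \ T) ≠ 0 := by
    intro h0
    apply h
    have hsub : s ⊆ (s ∩ T) ∪ (s \ T) := by
      intro x hx
      by_cases hxT : x ∈ T
      · exact Or.inl ⟨hx, hxT⟩
      · exact Or.inr ⟨hx, hxT⟩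
    exact le_antisymm (le_trans (measure_mono hsub)
      (le_trans (measure_union_le _ _) (by rw [hTnull, h0, add_zero]))) zero_le
  have hnt : (s \ T).Nontrivial := by
    rw [← Set.not_subsingleton_iff]
    exact fun hsub => h2 (hsub.measure_zero μ)
  obtain ⟨x, hx, y, hy, hxy⟩ := hnt
  have hx' : ∀ r, 0 < r → μ (s ∩ Metric.ball x r) ≠ 0 := by
    intro r hr h0; exact hx.2 ⟨r, hr, h0⟩
  have hy' : ∀ r, 0 < r → μ (s ∩ Metric.ball y r) ≠ 0 := by
    intro r hr h0; exact hy.2 ⟨r, hr, h0⟩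
  have hrpos : 0 < dist x y / 2 := half_pos (dist_pos.2 hxy)
  refine ⟨s ∩ Metric.ball x (dist x y / 2), hs.inter measurableSet_ball,
    Set.inter_subset_left, hx' _ hrpos, ?_⟩
  intro h0
  apply hy' _ hrpos
  refine measure_mono_null ?_ h0
  intro z hz
  refine ⟨hz.1, fun hz2 => ?_⟩
  have : dist x y ≤ dist x z + dist z y := dist_triangle _ _ _
  rw [dist_comm x z] at this
  have h1 : dist z x < dist x y / 2 := hz2.2
  have h2 : dist z y < dist x y / 2 := hz.2
  linarith

lemma my_disjoint_seq {s : Set α} (hs : MeasurableSet s) (h : μ s ≠ 0) :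
    ∃ B : ℕ → Set α, (∀ n, MeasurableSet (B n)) ∧ (∀ n, B n ⊆ s) ∧ (∀ n, μ (B n) ≠ 0) ∧
      Pairwise (Function.onFun Disjoint B) := by
  classical
  have key : ∀ t : Set α, ∃ u v : Set α, (MeasurableSet t ∧ t ⊆ s ∧ μ t ≠ 0) →
      (MeasurableSet u ∧ u ⊆ t ∧ μ u ≠ 0) ∧
      (MeasurableSet v ∧ v ⊆ s ∧ μ v ≠ 0) ∧ v = t \ u := by
    intro t
    by_cases ht : MeasurableSet t ∧ t ⊆ s ∧ μ t ≠ 0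
    · obtain ⟨u, hu, hus, hu0, hd0⟩ := my_split μ ht.1 ht.2.2
      exact ⟨u, t \ u, fun _ => ⟨⟨hu, hus, hu0⟩,
        ⟨ht.1.diff hu, Set.diff_subset.trans ht.2.1, hd0⟩, rfl⟩⟩
    · exact ⟨∅, ∅, fun h' => absurd h' ht⟩
  choose U V hUV using key
  let rem : ℕ → Set α := fun n => Nat.recAux s (fun _ prev => V prev) n
  have remS : ∀ n, rem (n + 1) = V (rem n) := fun n => rfl
  have hinv : ∀ n, MeasurableSet (rem n) ∧ rem n ⊆ s ∧ μ (rem n) ≠ 0 := by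
    intro n
    induction n with
    | zero => exact ⟨hs, subset_rfl, h⟩
    | succ n ih => exact (hUV (rem n) ih).2.1
  have hU : ∀ n, MeasurableSet (U (rem n)) ∧ U (rem n) ⊆ rem n ∧ μ (U (rem n)) ≠ 0 :=
    fun n => (hUV (rem n) (hinv n)).1
  have hVeq : ∀ n, rem (n + 1) = rem n \ U (rem n) := fun n => (hUV (rem n) (hinv n)).2.2
  have hmono : ∀ n m, n ≤ m → rem m ⊆ rem n := by
    intro n m hnm
    induction hnm with
    | refl => exact subset_rfl
    | @step k hk ih =>
        refine subset_trans ?_ ih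
        rw [hVeq k]
        exact Set.diff_subset
  have key2 : ∀ i j, i < j → Disjoint (U (rem i)) (U (rem j)) := by
    intro i j hij
    rw [Set.disjoint_left]
    intro a hai haj
    have : a ∈ rem (i + 1) := hmono (i + 1) j hij ((hU j).2.1 haj)
    rw [hVeq i] at this
    exact this.2 hai
  refine ⟨fun n => U (rem n), fun n => (hU n).1,
    fun n => (hU n).2.1.trans (hinv n).2.1, fun n => (hU n).2.2, ?_⟩
  intro i j hij
  rcases hij.lt_or_gt with h' | h'
  · exact key2 i j h'
  · exact (key2 j i h').symm

end SplitX

section EigX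

variable {X Y : Type*} [MeasurableSpace X] [MeasurableSpace Y]
  (ν₁ : Measure X) (ν₂ : Measure Y) [SFinite ν₁] [SFinite ν₂]

omit [SFinite ν₁] [SFinite ν₂] in
lemma my_lp_coeFn_sum {ι : Type*} (s : Finset ι) (F : ι → Lp ℂ 2 (ν₁.prod ν₂)) :
    (↑(∑ i ∈ s, F i) : X × Y → ℂ) =ᵐ[ν₁.prod ν₂] fun a => ∑ i ∈ s, F i a := by
  classical
  induction s using Finset.induction_on with
  | empty => simp only [Finset.sum_empty]; exact Lp.coeFn_zero (E := ℂ) (p := 2) (μ := ν₁.prod ν₂)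
  | @insert i s his ih =>
      rw [Finset.sum_insert his]
      refine (Lp.coeFn_add _ _).trans ?_
      filter_upwards [ih] with a ha
      simp only [Pi.add_apply, ha]
      rw [Finset.sum_insert his]

lemma my_eig_aux
    (k₁ : X → X → ℂ)
    (T₁ : Lp ℂ 2 (ν₁.prod ν₂) →L[ℂ] Lp ℂ 2 (ν₁.prod ν₂))
    (hT₁ : ∀ f : Lp ℂ 2 (ν₁.prod ν₂),
      (T₁ f : X × Y → ℂ) =ᵐ[ν₁.prod ν₂] fun p => ∫ s, k₁ p.1 s * f (s, p.2) ∂ν₁)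
    (k₀ : X × Y → ℝ)
    (H₀ : Lp ℂ 2 (ν₁.prod ν₂) →L[ℂ] Lp ℂ 2 (ν₁.prod ν₂))
    (hH₀ : ∀ f : Lp ℂ 2 (ν₁.prod ν₂),
      (H₀ f : X × Y → ℂ) =ᵐ[ν₁.prod ν₂] fun p => (k₀ p : ℂ) * f p)
    (lam : ℂ) (f : Lp ℂ 2 (ν₁.prod ν₂)) (hf : (H₀ - T₁) f = lam • f)
    (ψ : Y → ℂ) (g : Lp ℂ 2 (ν₁.prod ν₂))
    (hg : (g : X × Y → ℂ) =ᵐ[ν₁.prod ν₂] fun p => ψ p.2 * f p) :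
    (H₀ - T₁) g = lam • g := by
  apply Lp.ext
  -- facts about f
  have heq : ∀ᵐ p ∂ν₁.prod ν₂, (H₀ f : X × Y → ℂ) p - (T₁ f) p = lam * f p := by
    have h2 : H₀ f - T₁ f = lam • f := by rw [← ContinuousLinearMap.sub_apply]; exact hf
    have h3 := Lp.coeFn_sub (H₀ f) (T₁ f)
    have h4 := Lp.coeFn_smul lam f
    rw [h2] at h3
    filter_upwards [h3, h4] with p hp hq
    have : ((H₀ f : X × Y → ℂ) - (T₁ f : X × Y → ℂ)) p = (H₀ f : X × Y → ℂ) p - T₁ f p := rfl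
    rw [← this, ← hp, hq, Pi.smul_apply, smul_eq_mul]
  -- slice version of hg
  have hg2 : ∀ᵐ p ∂ν₁.prod ν₂, ∀ᵐ s ∂ν₁, (g : X × Y → ℂ) (s, p.2) = ψ p.2 * f (s, p.2) := by
    have hswap : ∀ᵐ q ∂ν₂.prod ν₁, (g : X × Y → ℂ) (q.2, q.1) = ψ q.1 * f (q.2, q.1) :=
      (Measure.measurePreserving_swap).quasiMeasurePreserving.ae hg
    have h2 : ∀ᵐ y ∂ν₂, ∀ᵐ s ∂ν₁, (g : X × Y → ℂ) (s, y) = ψ y * f (s, y) :=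
      Measure.ae_ae_of_ae_prod hswap
    exact (Measure.quasiMeasurePreserving_snd).ae h2
  have hgoal : (((H₀ - T₁) g : Lp ℂ 2 (ν₁.prod ν₂)) : X × Y → ℂ)
      =ᵐ[ν₁.prod ν₂] fun p => lam * g p := by
    have h2 : (H₀ - T₁) g = H₀ g - T₁ g := by rw [ContinuousLinearMap.sub_apply]
    rw [h2]
    refine (Lp.coeFn_sub _ _).trans ?_
    filter_upwards [hH₀ g, hT₁ g, hH₀ f, hT₁ f, hg, hg2, heq] with p e1 e2 e3 e4 e5 e6 e7
    have hT : (∫ s, k₁ p.1 s * (g : X × Y → ℂ) (s, p.2) ∂ν₁)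
        = ψ p.2 * ∫ s, k₁ p.1 s * (f : X × Y → ℂ) (s, p.2) ∂ν₁ := by
      rw [← integral_const_mul]
      refine integral_congr_ae ?_
      filter_upwards [e6] with s hs
      rw [hs]; ring
    show (H₀ g : X × Y → ℂ) p - (T₁ g : X × Y → ℂ) p = lam * g p
    rw [e1, e2, hT, ← e4, e5]
    linear_combination ψ p.2 * e7 - ψ p.2 * e3
  refine hgoal.trans ?_
  filter_upwards [Lp.coeFn_smul lam g] with p hp
  rw [hp, Pi.smul_apply, smul_eq_mul]

end EigX


section Setting

variable {d₁ d₂ : ℕ}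
  {Ω₁ : Set (EuclideanSpace ℝ (Fin d₁))} {Ω₂ : Set (EuclideanSpace ℝ (Fin d₂))}

set_option maxHeartbeats 2000000 in
/-- Eigenvalues of `W₁ = H₀ - T₁` are invariant under multiplication of eigenfunctions by
bounded measurable functions of the second variable; consequently, if `ν₂` is nonatomic,
every eigenvalue of `W₁` has infinite-dimensional eigenspace and `σ_d(W₁) = ∅`. -/
theorem discreteSpectrum_W₁_empty
    (ν₁ : Measure Ω₁) (ν₂ : Measure Ω₂) [IsFiniteMeasure ν₁] [IsFiniteMeasure ν₂]
    (k₁ : Ω₁ → Ω₁ → ℂ)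
    (T₁ : Lp ℂ 2 (ν₁.prod ν₂) →L[ℂ] Lp ℂ 2 (ν₁.prod ν₂))
    (hΩ₁ : IsCompact Ω₁) (hΩ₂ : IsCompact Ω₂)
    (hk₁c : Continuous fun p : Ω₁ × Ω₁ => k₁ p.1 p.2)
    (hk₁h : ∀ x s, k₁ x s = starRingEnd ℂ (k₁ s x))
    (hT₁ : ∀ f : Lp ℂ 2 (ν₁.prod ν₂),
      (T₁ f : Ω₁ × Ω₂ → ℂ) =ᵐ[ν₁.prod ν₂] fun p => ∫ s, k₁ p.1 s * f (s, p.2) ∂ν₁)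
    (k₀ : Ω₁ × Ω₂ → ℝ) (hk₀c : Continuous k₀)
    (H₀ : Lp ℂ 2 (ν₁.prod ν₂) →L[ℂ] Lp ℂ 2 (ν₁.prod ν₂))
    (hH₀ : ∀ f : Lp ℂ 2 (ν₁.prod ν₂),
      (H₀ f : Ω₁ × Ω₂ → ℂ) =ᵐ[ν₁.prod ν₂] fun p => (k₀ p : ℂ) * f p) :
    (∀ (lam : ℝ) (f : Lp ℂ 2 (ν₁.prod ν₂)), (H₀ - T₁) f = ((lam : ℝ) : ℂ) • f →
      ∀ ψ : Ω₂ → ℂ, Measurable ψ → (∃ C : ℝ, ∀ᵐ y ∂ν₂, ‖ψ y‖ ≤ C) →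
        ∀ g : Lp ℂ 2 (ν₁.prod ν₂),
          (g : Ω₁ × Ω₂ → ℂ) =ᵐ[ν₁.prod ν₂] (fun p => ψ p.2 * f p) →
          (H₀ - T₁) g = ((lam : ℝ) : ℂ) • g) ∧
    (NoAtoms ν₂ →
      (∀ lam : ℂ,
        Module.End.HasEigenvalue
          ((H₀ - T₁ : Lp ℂ 2 (ν₁.prod ν₂) →L[ℂ] Lp ℂ 2 (ν₁.prod ν₂)) :
            Lp ℂ 2 (ν₁.prod ν₂) →ₗ[ℂ] Lp ℂ 2 (ν₁.prod ν₂)) lam →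
        ¬ FiniteDimensional ℂ
          (Module.End.eigenspace
            ((H₀ - T₁ : Lp ℂ 2 (ν₁.prod ν₂) →L[ℂ] Lp ℂ 2 (ν₁.prod ν₂)) :
              Lp ℂ 2 (ν₁.prod ν₂) →ₗ[ℂ] Lp ℂ 2 (ν₁.prod ν₂)) lam)) ∧
      discreteSpectrum (H₀ - T₁) = ∅) := by
  constructor
  · intro lam f hf ψ hψm hψb g hg
    exact my_eig_aux ν₁ ν₂ k₁ T₁ hT₁ k₀ H₀ hH₀ _ f hf ψ g hg
  intro hNA
  haveI : NullSingletonClass ν₂ := hNA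
  have main : ∀ lam : ℂ,
      Module.End.HasEigenvalue
        ((H₀ - T₁ : Lp ℂ 2 (ν₁.prod ν₂) →L[ℂ] Lp ℂ 2 (ν₁.prod ν₂)) :
          Lp ℂ 2 (ν₁.prod ν₂) →ₗ[ℂ] Lp ℂ 2 (ν₁.prod ν₂)) lam →
      ¬ FiniteDimensional ℂ
        (Module.End.eigenspace
          ((H₀ - T₁ : Lp ℂ 2 (ν₁.prod ν₂) →L[ℂ] Lp ℂ 2 (ν₁.prod ν₂)) :
            Lp ℂ 2 (ν₁.prod ν₂) →ₗ[ℂ] Lp ℂ 2 (ν₁.prod ν₂)) lam) := by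
    intro lam hlam hfd
    obtain ⟨f, hfmem, hf0⟩ := hlam.exists_hasEigenvector
    have hfeig : (H₀ - T₁) f = lam • f := by
      have := Module.End.mem_eigenspace_iff.1 hfmem
      rwa [ContinuousLinearMap.coe_coe] at this
    -- measurable representative
    have hFm : AEStronglyMeasurable (f : Ω₁ × Ω₂ → ℂ) (ν₁.prod ν₂) := Lp.aestronglyMeasurable f
    set F : Ω₁ × Ω₂ → ℂ := hFm.mk _ with hFdef
    have hFmeas : Measurable F := hFm.stronglyMeasurable_mk.measurable
    have hFae : (f : Ω₁ × Ω₂ → ℂ) =ᵐ[ν₁.prod ν₂] F := hFm.ae_eq_mk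
    set G : Ω₂ → ℝ≥0∞ := fun y => ∫⁻ x, (‖F (x, y)‖₊ : ℝ≥0∞) ∂ν₁ with hGdef
    have hGmeas : Measurable G := Measurable.lintegral_prod_left' hFmeas.nnnorm.coe_nnreal_ennreal
    have hpos : ∫⁻ y, G y ∂ν₂ ≠ 0 := by
      rw [hGdef, ← lintegral_prod_symm _ hFmeas.nnnorm.coe_nnreal_ennreal.aemeasurable]
      intro h0
      rw [lintegral_eq_zero_iff hFmeas.nnnorm.coe_nnreal_ennreal] at h0
      apply hf0
      have : (f : Ω₁ × Ω₂ → ℂ) =ᵐ[ν₁.prod ν₂] 0 := by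
        filter_upwards [hFae, h0] with p h1 h2
        simp only [Pi.zero_apply] at h2 ⊢
        rw [h1]
        simpa using h2
      exact Lp.ext (this.trans (Lp.coeFn_zero (E := ℂ) (p := 2) (μ := ν₁.prod ν₂)).symm)
    set A : Set Ω₂ := {y | G y ≠ 0} with hAdef
    have hAmeas : MeasurableSet A := (hGmeas (measurableSet_singleton 0)).compl
    have hA0 : ν₂ A ≠ 0 := by
      intro h0
      apply hpos
      rw [lintegral_eq_zero_iff hGmeas]
      have : ∀ᵐ y ∂ν₂, y ∉ A := by
        rw [ae_iff]
        simpa using h0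
      filter_upwards [this] with y hy
      simpa [hAdef] using hy
    obtain ⟨B, hBmeas, hBsub, hB0, hBdisj⟩ := my_disjoint_seq ν₂ hAmeas hA0
    -- the eigenfunctions
    set ψ : ℕ → Ω₂ → ℂ := fun n => (B n).indicator (fun _ => (1 : ℂ)) with hψdef
    have hψle : ∀ n y, ‖ψ n y‖ ≤ 1 := by
      intro n y
      rw [hψdef]
      by_cases hy : y ∈ B n <;> simp [Set.indicator_apply, hy]
    have hmemLp : ∀ n, MemLp (fun p : Ω₁ × Ω₂ => ψ n p.2 * f p) 2 (ν₁.prod ν₂) := by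
      intro n
      refine MemLp.of_le (Lp.memLp f) ?_ ?_
      · exact (((measurable_const.indicator (hBmeas n)).comp
          measurable_snd).aestronglyMeasurable.mul hFm)
      · refine Eventually.of_forall fun p => ?_
        rw [norm_mul]
        calc ‖ψ n p.2‖ * ‖(f : Ω₁ × Ω₂ → ℂ) p‖ ≤ 1 * ‖(f : Ω₁ × Ω₂ → ℂ) p‖ :=
          mul_le_mul_of_nonneg_right (hψle n p.2) (norm_nonneg _)
        _ = ‖(f : Ω₁ × Ω₂ → ℂ) p‖ := one_mul _
    set g : ℕ → Lp ℂ 2 (ν₁.prod ν₂) := fun n => (hmemLp n).toLp _ with hgdef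
    have hgae : ∀ n, (g n : Ω₁ × Ω₂ → ℂ) =ᵐ[ν₁.prod ν₂] fun p => ψ n p.2 * f p :=
      fun n => (hmemLp n).coeFn_toLp
    have hgeig : ∀ n, g n ∈ Module.End.eigenspace
        ((H₀ - T₁ : Lp ℂ 2 (ν₁.prod ν₂) →L[ℂ] Lp ℂ 2 (ν₁.prod ν₂)) :
          Lp ℂ 2 (ν₁.prod ν₂) →ₗ[ℂ] Lp ℂ 2 (ν₁.prod ν₂)) lam := by
      intro n
      rw [Module.End.mem_eigenspace_iff, ContinuousLinearMap.coe_coe]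
      exact my_eig_aux ν₁ ν₂ k₁ T₁ hT₁ k₀ H₀ hH₀ lam f hfeig (ψ n) (g n) (hgae n)
    -- linear independence
    set E := Module.End.eigenspace
        ((H₀ - T₁ : Lp ℂ 2 (ν₁.prod ν₂) →L[ℂ] Lp ℂ 2 (ν₁.prod ν₂)) :
          Lp ℂ 2 (ν₁.prod ν₂) →ₗ[ℂ] Lp ℂ 2 (ν₁.prod ν₂)) lam with hEdef
    set v : ℕ → E := fun n => ⟨g n, hgeig n⟩ with hvdef
    have hli : LinearIndependent ℂ v := by
      rw [linearIndependent_iff']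
      intro s c hsum j hjs
      by_contra hcj
      have hsum2 : (∑ i ∈ s, c i • g i) = 0 := by
        have := congrArg (Subtype.val) hsum
        simpa [hvdef] using this
      have hzero : ∀ᵐ p ∂ν₁.prod ν₂, ∑ i ∈ s, c i * (ψ i p.2 * (f : Ω₁ × Ω₂ → ℂ) p) = 0 := by
        have h1 : (↑(∑ i ∈ s, c i • g i) : Ω₁ × Ω₂ → ℂ) =ᵐ[ν₁.prod ν₂] 0 := by
          rw [hsum2]
          exact Lp.coeFn_zero _ _ _
        have h2 := my_lp_coeFn_sum ν₁ ν₂ s (fun i => c i • g i)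
        have h3 : ∀ᵐ p ∂ν₁.prod ν₂, ∀ i ∈ s,
            ((c i • g i : Lp ℂ 2 (ν₁.prod ν₂)) : Ω₁ × Ω₂ → ℂ) p
              = c i * (ψ i p.2 * (f : Ω₁ × Ω₂ → ℂ) p) := by
          rw [Filter.eventually_all_finset]
          intro i hi
          filter_upwards [Lp.coeFn_smul (c i) (g i), hgae i] with p hp hq
          rw [hp, Pi.smul_apply, smul_eq_mul, hq]
        filter_upwards [h1, h2, h3] with p e1 e2 e3
        rw [← Finset.sum_congr rfl e3, ← e2, e1]
        rfl
      have hj : ∀ᵐ p ∂ν₁.prod ν₂, p.2 ∈ B j → F p = 0 := by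
        filter_upwards [hzero, hFae] with p hp hFp hmem
        have hone : ψ j p.2 = 1 := Set.indicator_of_mem hmem _
        have hsum3 : c j * (ψ j p.2 * (f : Ω₁ × Ω₂ → ℂ) p) = 0 := by
          have hss := Finset.sum_eq_single_of_mem
            (f := fun i => c i * (ψ i p.2 * (f : Ω₁ × Ω₂ → ℂ) p)) j hjs ?_
          · rw [hp] at hss
            exact hss.symm
          · intro i hi hij
            have hnot : p.2 ∉ B i := fun h => (Set.disjoint_left.1 (hBdisj hij)) h hmem
            simp [hψdef, Set.indicator_of_notMem hnot]
        rw [hone, one_mul] at hsum3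
        rcases mul_eq_zero.1 hsum3 with h | h
        · exact absurd h hcj
        · rw [← hFp]; exact h
      -- transfer to slices
      have hslice : ∀ᵐ y ∂ν₂, ∀ᵐ x ∂ν₁, (y ∈ B j → F (x, y) = 0) := by
        have hswap : ∀ᵐ q ∂ν₂.prod ν₁, (q.1 ∈ B j → F (q.2, q.1) = 0) :=
          (Measure.measurePreserving_swap).quasiMeasurePreserving.ae hj
        exact Measure.ae_ae_of_ae_prod hswap
      have hGzero : ∀ᵐ y ∂ν₂, y ∈ B j → G y = 0 := by
        filter_upwards [hslice] with y hy hmem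
        have h0 : ∀ᵐ x ∂ν₁, (‖F (x, y)‖₊ : ℝ≥0∞) = 0 := by
          filter_upwards [hy] with x hx
          rw [hx hmem]; simp
        show G y = 0
        rw [show G y = ∫⁻ x, (‖F (x, y)‖₊ : ℝ≥0∞) ∂ν₁ from rfl, lintegral_congr_ae h0]
        simp
      apply hB0 j
      have hsub2 : B j ⊆ {y | ¬ (y ∈ B j → G y = 0)} := by
        intro y hy
        intro hcontra
        exact (hBsub j hy) (hcontra hy)
      refine measure_mono_null hsub2 ?_
      rw [← ae_iff] at *
      exact hGzero
    exact Module.Finite.not_linearIndependent_of_infinite v hli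
  refine ⟨main, ?_⟩
  ext z
  simp only [discreteSpectrum, Set.mem_setOf_eq, Set.mem_empty_iff_false, iff_false]
  rintro ⟨-, hev, hfd⟩
  exact main z hev hfd

end Setting

end
end
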